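/- arXiv:0804.3089 — 4 statements merged into one kernel-verified Lean document; each statement's English description precedes it below -/
import Mathlib

section
/- Let (X,ρ) be a Polish metric space and let μ be a probability measure on X satisfying the Talagrand inequality T₂(1/a) for some a > 0, i.e. T₂(ν,μ) ≤ (1/a)·H(ν|μ) for every probability measure ν on X. Then for every integer n ≥ 1 and every measurable set A ⊆ Xⁿ with μ⊗ⁿ(A) ≥ 1/2, one has μ⊗ⁿ(Aʳ) ≥ 1 − exp(−a(r−r₀)²) for all r ≥ r₀, where r₀ = √(log 2 / a) and Aʳ is the r-enlargement of A with respect to the metric ρ₂ⁿ(x,y) = (Σᵢ₌₁ⁿ ρ(xⁱ,yⁱ)²)^{1/2}. -/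
open MeasureTheory Filter Set
open scoped ENNReal NNReal Topology Pointwise Classical

noncomputable section

/-- Optimal transportation cost for cost function `c`, infimum over couplings. -/
def transportCost {α : Type*} [MeasurableSpace α] (c : α → α → ℝ≥0∞)
    (ν₁ ν₂ : Measure α) : ℝ≥0∞ :=
  ⨅ (π : Measure (α × α)) (_ : π.fst = ν₁ ∧ π.snd = ν₂), ∫⁻ p, c p.1 p.2 ∂π

/-- Relative entropy `H(ν|μ)`. -/
def relEntropy {α : Type*} [MeasurableSpace α] (ν μ : Measure α) : ℝ≥0∞ :=
  if ν ≪ μ ∧ Integrable (fun x => Real.log ((ν.rnDeriv μ x).toReal)) ν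
  then ENNReal.ofReal (∫ x, Real.log ((ν.rnDeriv μ x).toReal) ∂ν)
  else ∞

/-- Empirical measure of the tuple `x`. -/
def empMeasure {α : Type*} [MeasurableSpace α] {n : ℕ} (x : Fin n → α) : Measure α :=
  (n : ℝ≥0∞)⁻¹ • ∑ i, Measure.dirac (x i)

/-- Wasserstein distance of order `p`. -/
def Wp {α : Type*} [PseudoEMetricSpace α] [MeasurableSpace α] (p : ℝ)
    (ν₁ ν₂ : Measure α) : ℝ :=
  ((transportCost (fun x y => edist x y ^ p) ν₁ ν₂) ^ (1 / p)).toReal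

/-- Length of the gradient `|∇f|(x)`. -/
def gradLen {α : Type*} [MetricSpace α] (f : α → ℝ) (x : α) : ℝ :=
  Filter.limsup (fun y => |f x - f y| / dist x y) (𝓝[≠] x)

/-- Subgradient norm `|∇⁻f|(x)`. -/
def subGradLen {α : Type*} [MetricSpace α] (f : α → ℝ) (x : α) : ℝ :=
  Filter.limsup (fun y => max (f y - f x) 0 / dist x y) (𝓝[≠] x)

/-- Entropy functional `Ent_μ(g)`. -/
def entFun {α : Type*} [MeasurableSpace α] (μ : Measure α) (g : α → ℝ) : ℝ :=
  ∫ x, g x * Real.log (g x) ∂μ - (∫ x, g x ∂μ) * Real.log (∫ x, g x ∂μ)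

/-- Logarithmic Sobolev inequality `LSI(C)`. -/
def LSI {α : Type*} [MetricSpace α] [MeasurableSpace α] (μ : Measure α) (C : ℝ) : Prop :=
  ∀ f : α → ℝ, LocallyLipschitz f →
    entFun μ (fun x => (f x) ^ 2) ≤ C * ∫ x, (gradLen f x) ^ 2 ∂μ


private lemma real_le_of_forall_pos_le_add {a b : ℝ} (h : ∀ ε : ℝ, 0 < ε → a ≤ b + ε) :
    a ≤ b := by
  by_contra hc
  push_neg at hc
  have := h ((a - b) / 2) (by linarith)
  linarith

private lemma bddBelow_range_of_le {ι : Type*} {u : ι → ℝ} {c : ℝ} (h : ∀ i, c ≤ u i) :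
    BddBelow (Set.range u) := ⟨c, by rintro _ ⟨i, rfl⟩; exact h i⟩

private lemma ciInf_le_ciInf_add {ι : Type*} [Nonempty ι] {u v : ι → ℝ}
    (hu : BddBelow (Set.range u)) (c : ℝ) (h : ∀ i, u i ≤ v i + c) :
    (⨅ i, u i) ≤ (⨅ i, v i) + c := by
  rw [← sub_le_iff_le_add]
  exact le_ciInf fun i => by have h1 := ciInf_le hu i; have h2 := h i; linarith

private lemma measurable_iInf_of_continuous {α β : Type*} [TopologicalSpace α] [Nonempty α]
    [TopologicalSpace β] [MeasurableSpace β] [OpensMeasurableSpace β]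
    (F : α → β → ℝ) (hc : ∀ x, Continuous (F x))
    (hb : ∀ y, BddBelow (Set.range fun x => F x y)) :
    Measurable fun y => ⨅ x, F x y := by
  apply measurable_of_Iio
  intro b
  have hset : (fun y => ⨅ x, F x y) ⁻¹' Set.Iio b = ⋃ x, {y | F x y < b} := by
    ext y
    simp only [Set.mem_preimage, Set.mem_Iio, Set.mem_iUnion, Set.mem_setOf_eq]
    constructor
    · exact fun h => exists_lt_of_ciInf_lt h
    · rintro ⟨x, hx⟩; exact lt_of_le_of_lt (ciInf_le (hb y) x) hx
  rw [hset]
  exact (isOpen_iUnion fun x => isOpen_lt (hc x) continuous_const).measurableSet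

private lemma integrable_of_abs_le {α : Type*} [MeasurableSpace α] {μ : Measure α}
    [IsFiniteMeasure μ] {f : α → ℝ} {M : ℝ} (hm : AEStronglyMeasurable f μ)
    (hb : ∀ x, |f x| ≤ M) : Integrable f μ :=
  (integrable_const M).mono' hm (ae_of_all _ fun x => by simpa [Real.norm_eq_abs] using hb x)

private lemma sum_sq_le_sq_sum {n : ℕ} (u : Fin n → ℝ) (hu : ∀ i, 0 ≤ u i) :
    ∑ i, u i ^ 2 ≤ (∑ i, u i) ^ 2 := by
  have h : ∀ i ∈ Finset.univ, u i ^ 2 ≤ u i * ∑ j, u j := by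
    intro i _
    rw [sq]
    exact mul_le_mul_of_nonneg_left (Finset.single_le_sum (fun j _ => hu j) (Finset.mem_univ i))
      (hu i)
  calc ∑ i, u i ^ 2 ≤ ∑ i, u i * ∑ j, u j := Finset.sum_le_sum h
  _ = (∑ i, u i) ^ 2 := by rw [← Finset.sum_mul, sq]

private lemma sqrt_sum_sq_le_sum {n : ℕ} (u : Fin n → ℝ) (hu : ∀ i, 0 ≤ u i) :
    Real.sqrt (∑ i, u i ^ 2) ≤ ∑ i, u i := by
  have h := Real.sqrt_le_sqrt (sum_sq_le_sq_sum u hu)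
  rwa [Real.sqrt_sq (Finset.sum_nonneg fun i _ => hu i)] at h

private lemma sqrt_sum_sq_add_le {n : ℕ} (u v : Fin n → ℝ) (hu : ∀ i, 0 ≤ u i)
    (hv : ∀ i, 0 ≤ v i) :
    Real.sqrt (∑ i, (u i + v i) ^ 2)
      ≤ Real.sqrt (∑ i, u i ^ 2) + Real.sqrt (∑ i, v i ^ 2) := by
  set s := Real.sqrt (∑ i, u i ^ 2) with hs
  set t := Real.sqrt (∑ i, v i ^ 2) with ht
  have hs0 : 0 ≤ s := Real.sqrt_nonneg _
  have ht0 : 0 ≤ t := Real.sqrt_nonneg _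
  have hs2 : s ^ 2 = ∑ i, u i ^ 2 := Real.sq_sqrt (Finset.sum_nonneg fun i _ => sq_nonneg _)
  have ht2 : t ^ 2 = ∑ i, v i ^ 2 := Real.sq_sqrt (Finset.sum_nonneg fun i _ => sq_nonneg _)
  have hcs : ∑ i, u i * v i ≤ s * t := by
    have h1 : (∑ i, u i * v i) ^ 2 ≤ (∑ i, u i ^ 2) * ∑ i, v i ^ 2 :=
      Finset.sum_mul_sq_le_sq_mul_sq Finset.univ u v
    have h2 : 0 ≤ ∑ i, u i * v i :=
      Finset.sum_nonneg fun i _ => mul_nonneg (hu i) (hv i)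
    nlinarith [mul_nonneg hs0 ht0]
  have hexp : ∑ i, (u i + v i) ^ 2 ≤ (s + t) ^ 2 := by
    have : ∑ i, (u i + v i) ^ 2 = (∑ i, u i ^ 2) + 2 * (∑ i, u i * v i) + ∑ i, v i ^ 2 := by
      simp only [add_sq, Finset.sum_add_distrib, Finset.mul_sum, mul_assoc]
    rw [this, ← hs2, ← ht2]; nlinarith
  calc Real.sqrt (∑ i, (u i + v i) ^ 2) ≤ Real.sqrt ((s + t) ^ 2) := Real.sqrt_le_sqrt hexp
  _ = s + t := Real.sqrt_sq (by linarith)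

private lemma abs_min_sub_min_le {a b c : ℝ} : |min a c - min b c| ≤ |a - b| := by
  rcases le_total a c with h1 | h1 <;> rcases le_total b c with h2 | h2 <;>
    simp only [min_eq_left, min_eq_right, h1, h2] <;> rw [abs_le] <;>
    constructor <;> linarith [le_abs_self (a - b), neg_abs_le (a - b), abs_nonneg (a - b)]


private lemma base_tau {X : Type*} [MetricSpace X] [SecondCountableTopology X] [MeasurableSpace X] [BorelSpace X]
    (μ : Measure X) [IsProbabilityMeasure μ] (a : ℝ) (ha : 0 < a)
    (hT2 : ∀ ν : Measure X, IsProbabilityMeasure ν →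
      transportCost (fun x y => edist x y ^ (2 : ℝ)) ν μ ≤
        ENNReal.ofReal (1 / a) * relEntropy ν μ)
    (f : X → ℝ) (M : ℝ) (hf : Continuous f) (hb : ∀ x, |f x| ≤ M) :
    ∫⁻ y, ENNReal.ofReal (Real.exp (⨅ x, (f x + a * dist x y ^ 2))) ∂μ
      ≤ ENNReal.ofReal (Real.exp (∫ x, f x ∂μ)) := by
  rcases isEmpty_or_nonempty X with hX | hX
  · simp [μ.eq_zero_of_isEmpty]
  set q : X → ℝ := fun y => ⨅ x, (f x + a * dist x y ^ 2) with hq_def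
  have hbddF : ∀ y, BddBelow (Set.range fun x => f x + a * dist x y ^ 2) := fun y =>
    bddBelow_range_of_le (c := -M) fun x => by
      have h1 := (abs_le.1 (hb x)).1
      nlinarith [sq_nonneg (dist x y)]
  have hq_le : ∀ y, q y ≤ f y := fun y => by
    have := ciInf_le (hbddF y) y
    simpa using this
  have hq_lb : ∀ y, -M ≤ q y := fun y => le_ciInf fun x => by
    have h1 := (abs_le.1 (hb x)).1
    nlinarith [sq_nonneg (dist x y)]
  have hq_ub : ∀ y, q y ≤ M := fun y => (hq_le y).trans (abs_le.1 (hb y)).2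
  have hq_meas : Measurable q := by
    apply measurable_iInf_of_continuous
    · exact fun x => continuous_const.add
        (continuous_const.mul ((Continuous.dist continuous_const continuous_id).pow 2))
    · exact hbddF
  -- exp q integrable
  have hexpq_meas : Measurable fun x => Real.exp (q x) := Real.measurable_exp.comp hq_meas
  have hqi : Integrable (fun x => Real.exp (q x)) μ :=
    integrable_of_abs_le hexpq_meas.aestronglyMeasurable
      (M := Real.exp M) fun x => by
        rw [abs_of_nonneg (Real.exp_pos _).le]
        exact Real.exp_le_exp.2 (hq_ub x)
  set Zr : ℝ := ∫ x, Real.exp (q x) ∂μ with hZr_def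
  have hZ_pos : 0 < Zr := by
    have hle : ∫ x, Real.exp (-M) ∂μ ≤ Zr :=
      integral_mono (integrable_const _) hqi fun x => Real.exp_le_exp.2 (hq_lb x)
    have : (0:ℝ) < ∫ _ : X, Real.exp (-M) ∂μ := by
      simp [integral_const, Real.exp_pos]
    linarith
  -- the tilted measure
  set ν : Measure X := μ.tilted q with hν_def
  haveI hνP : IsProbabilityMeasure ν := isProbabilityMeasure_tilted hqi
  have hνμ : ν ≪ μ := by
    rw [hν_def, Measure.tilted]
    exact withDensity_absolutelyContinuous _ _
  have hrn : (ν.rnDeriv μ) =ᵐ[μ] fun x => ENNReal.ofReal (Real.exp (q x) / Zr) :=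
    rnDeriv_tilted_left_self hq_meas.aemeasurable
  have hlog_mu : (fun x => Real.log ((ν.rnDeriv μ x).toReal)) =ᵐ[μ] fun x => q x - Real.log Zr := by
    filter_upwards [hrn] with x hx
    rw [hx, ENNReal.toReal_ofReal (by positivity), Real.log_div (Real.exp_ne_zero _) hZ_pos.ne',
      Real.log_exp]
  have hlog_nu : (fun x => Real.log ((ν.rnDeriv μ x).toReal)) =ᵐ[ν] fun x => q x - Real.log Zr :=
    hνμ.ae_le hlog_mu
  have hqint_nu : Integrable q ν := integrable_of_abs_le hq_meas.aestronglyMeasurable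
    (M := M) (fun x => abs_le.2 ⟨hq_lb x, hq_ub x⟩)
  have hlog_int : Integrable (fun x => Real.log ((ν.rnDeriv μ x).toReal)) ν :=
    (hqint_nu.sub (integrable_const _)).congr hlog_nu.symm
  set Hr : ℝ := ∫ x, q x ∂ν - Real.log Zr with hHr_def
  have hEnt : relEntropy ν μ = ENNReal.ofReal Hr := by
    rw [relEntropy, if_pos ⟨hνμ, hlog_int⟩]
    congr 1
    rw [integral_congr_ae hlog_nu, integral_sub hqint_nu (integrable_const _), integral_const]
    simp [hHr_def]
  -- Hr ≥ 0 via log x ≤ x - 1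
  have hint_exp_neg : ∫ x, Real.exp (-q x) ∂ν = 1 / Zr := by
    rw [hν_def, integral_tilted q (fun x => Real.exp (-q x))]
    simp_rw [← hZr_def]
    have hpt : ∀ x, (Real.exp (q x) / Zr) • Real.exp (-q x) = 1 / Zr := fun x => by
      rw [smul_eq_mul, Real.exp_neg]
      field_simp
    simp_rw [hpt]
    simp [integral_const]
  have hHr_nonneg : 0 ≤ Hr := by
    have h1 : ∀ x, Real.log Zr - q x ≤ Zr * Real.exp (-q x) - 1 := fun x => by
      have hpos : 0 < Zr * Real.exp (-q x) := by positivity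
      have h2 := Real.log_le_sub_one_of_pos hpos
      rwa [Real.log_mul hZ_pos.ne' (Real.exp_ne_zero _), Real.log_exp] at h2
    have hi2' : Integrable (fun x => Real.exp (-q x)) ν :=
      integrable_of_abs_le (Real.measurable_exp.comp hq_meas.neg).aestronglyMeasurable
        (M := Real.exp M) fun x => by
          rw [abs_of_nonneg (Real.exp_pos _).le]
          exact Real.exp_le_exp.2 (by linarith [hq_lb x])
    have hi1 : Integrable (fun x => Real.log Zr - q x) ν := (integrable_const _).sub hqint_nu
    have hi2 : Integrable (fun x => Zr * Real.exp (-q x) - 1) ν :=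
      (hi2'.const_mul Zr).sub (integrable_const _)
    have h2 := integral_mono hi1 hi2 h1
    have e1 : ∫ x, (Real.log Zr - q x) ∂ν = Real.log Zr - ∫ x, q x ∂ν := by
      rw [integral_sub (integrable_const _) hqint_nu, integral_const]; simp
    have e2 : ∫ x, (Zr * Real.exp (-q x) - 1) ∂ν = 0 := by
      rw [integral_sub (hi2'.const_mul Zr) (integrable_const _), integral_const_mul,
        hint_exp_neg, integral_const]
      field_simp
      simp
    rw [e1, e2] at h2
    rw [hHr_def]
    linarith
  -- transport bound
  set T : ℝ≥0∞ := transportCost (fun x y => edist x y ^ (2:ℝ)) ν μ with hT_def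
  have hT_le : T ≤ ENNReal.ofReal (Hr / a) := by
    refine (hT2 ν hνP).trans ?_
    rw [hEnt, ← ENNReal.ofReal_mul (by positivity)]
    apply le_of_eq
    congr 1
    field_simp
  have hT_fin : T ≠ ∞ := (lt_of_le_of_lt hT_le ENNReal.ofReal_lt_top).ne
  have hT_toReal : T.toReal ≤ Hr / a :=
    ENNReal.toReal_le_of_le_ofReal (div_nonneg hHr_nonneg ha.le) hT_le
  have hkey : ∫ x, q x ∂ν ≤ (∫ x, f x ∂μ + Hr) := by
    apply real_le_of_forall_pos_le_add
    intro ε hε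
    have hlt : T < T + ENNReal.ofReal (ε / a) := by
      refine ENNReal.lt_add_right hT_fin ?_
      simp only [ne_eq, ENNReal.ofReal_eq_zero, not_le]
      positivity
    obtain ⟨π, hπ, hπc⟩ : ∃ π : Measure (X × X), (π.fst = ν ∧ π.snd = μ) ∧
        ∫⁻ p, edist p.1 p.2 ^ (2:ℝ) ∂π < T + ENNReal.ofReal (ε / a) := by
      have h := hlt
      conv_lhs at h => rw [hT_def, transportCost]
      rw [iInf_lt_iff] at h
      obtain ⟨π, h⟩ := h
      rw [iInf_lt_iff] at h
      obtain ⟨hc, h⟩ := h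
      exact ⟨π, hc, h⟩
    obtain ⟨hπ1, hπ2⟩ := hπ
    haveI : IsProbabilityMeasure π := ⟨by rw [← Measure.fst_univ, hπ1]; exact measure_univ⟩
    have hcost_eq : ∀ p : X × X, edist p.1 p.2 ^ (2:ℝ) = ENNReal.ofReal (dist p.1 p.2 ^ 2) := by
      intro p
      rw [edist_dist, ENNReal.ofReal_rpow_of_nonneg dist_nonneg (by norm_num)]
      rw [show (2:ℝ) = ((2:ℕ):ℝ) by norm_num, Real.rpow_natCast]
    have hd2_meas : Measurable fun p : X × X => dist p.1 p.2 ^ 2 :=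
      (continuous_dist.pow 2).measurable
    have hlint_fin : ∫⁻ p, ENNReal.ofReal (dist p.1 p.2 ^ 2) ∂π < ⊤ := by
      simp_rw [← hcost_eq]
      exact hπc.trans_le le_top
    have hd2_int : Integrable (fun p : X × X => dist p.1 p.2 ^ 2) π := by
      refine ⟨hd2_meas.aestronglyMeasurable, ?_⟩
      rw [hasFiniteIntegral_iff_ofReal (ae_of_all _ fun p => by positivity)]
      exact hlint_fin
    have hd2_val : ∫ p, dist p.1 p.2 ^ 2 ∂π ≤ T.toReal + ε / a := by
      rw [integral_eq_lintegral_of_nonneg_ae (ae_of_all _ fun p => by positivity)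
        hd2_meas.aestronglyMeasurable]
      have hle := le_of_lt hπc
      simp_rw [hcost_eq] at hle
      calc (∫⁻ p, ENNReal.ofReal (dist p.1 p.2 ^ 2) ∂π).toReal
          ≤ (T + ENNReal.ofReal (ε / a)).toReal :=
            ENNReal.toReal_mono (by simp [hT_fin, ENNReal.add_ne_top]) hle
        _ = T.toReal + ε / a := by
            rw [ENNReal.toReal_add hT_fin ENNReal.ofReal_ne_top,
              ENNReal.toReal_ofReal (by positivity)]
    have hq_nu_eq : ∫ x, q x ∂ν = ∫ p, q p.1 ∂π := by
      rw [← hπ1, show π.fst = π.map Prod.fst from rfl]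
      exact integral_map measurable_fst.aemeasurable hq_meas.aestronglyMeasurable
    have hf_mu_eq : ∫ x, f x ∂μ = ∫ p, f p.2 ∂π := by
      rw [← hπ2, show π.snd = π.map Prod.snd from rfl]
      exact integral_map measurable_snd.aemeasurable hf.measurable.aestronglyMeasurable
    have hpt : ∀ p : X × X, q p.1 ≤ f p.2 + a * dist p.1 p.2 ^ 2 := fun p => by
      have h4 := ciInf_le (hbddF p.1) p.2
      rwa [dist_comm] at h4
    have hint_q : Integrable (fun p : X × X => q p.1) π :=
      integrable_of_abs_le (hq_meas.comp measurable_fst).aestronglyMeasurable (M := M)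
        (fun p => abs_le.2 ⟨hq_lb _, hq_ub _⟩)
    have hint_f : Integrable (fun p : X × X => f p.2) π :=
      integrable_of_abs_le ((hf.measurable).comp measurable_snd).aestronglyMeasurable (M := M)
        (fun p => hb _)
    have h3 : ∫ p, q p.1 ∂π ≤ ∫ p, f p.2 ∂π + a * ∫ p, dist p.1 p.2 ^ 2 ∂π := by
      have h5 := integral_mono hint_q (hint_f.add (hd2_int.const_mul a)) hpt
      have h6 := integral_add hint_f (hd2_int.const_mul a)
      rw [integral_const_mul] at h6
      exact h5.trans_eq h6
    have h6 : a * ∫ p, dist p.1 p.2 ^ 2 ∂π ≤ Hr + ε := by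
      have h7 : a * ∫ p, dist p.1 p.2 ^ 2 ∂π ≤ a * (T.toReal + ε / a) := by
        apply mul_le_mul_of_nonneg_left hd2_val ha.le
      have h8 : a * (T.toReal + ε / a) = a * T.toReal + ε := by field_simp
      have h9 : a * T.toReal ≤ Hr := by
        have := mul_le_mul_of_nonneg_left hT_toReal ha.le
        rwa [mul_div_cancel₀ _ ha.ne'] at this
      linarith
    calc ∫ x, q x ∂ν = ∫ p, q p.1 ∂π := hq_nu_eq
      _ ≤ ∫ p, f p.2 ∂π + a * ∫ p, dist p.1 p.2 ^ 2 ∂π := h3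
      _ ≤ ∫ x, f x ∂μ + (Hr + ε) := by rw [hf_mu_eq]; linarith
      _ = ∫ x, f x ∂μ + Hr + ε := by ring
  have hlogZ : Real.log Zr ≤ ∫ x, f x ∂μ := by
    have h10 : ∫ x, q x ∂ν - Hr = Real.log Zr := by rw [hHr_def]; ring
    linarith
  have hfin1 : ∫⁻ y, ENNReal.ofReal (Real.exp (q y)) ∂μ = ENNReal.ofReal Zr :=
    (ofReal_integral_eq_lintegral_ofReal hqi (ae_of_all _ fun x => (Real.exp_pos _).le)).symm
  rw [hfin1]
  exact ENNReal.ofReal_le_ofReal ((Real.log_le_iff_le_exp hZ_pos).1 hlogZ)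

private lemma cont_of_lipsum {X : Type*} [MetricSpace X] {n : ℕ} {L : ℝ} (hL : 0 ≤ L)
    {f : (Fin n → X) → ℝ} (h : ∀ x y, |f x - f y| ≤ L * ∑ i, dist (x i) (y i)) :
    Continuous f := by
  refine (LipschitzWith.of_dist_le_mul (K := ⟨L * n, by positivity⟩) fun x y => ?_).continuous
  show dist (f x) (f y) ≤ L * n * dist x y
  have h1 : ∑ i : Fin n, dist (x i) (y i) ≤ ∑ _i : Fin n, dist x y :=
    Finset.sum_le_sum fun i _ => dist_le_pi_dist x y i
  have h2 : (∑ _i : Fin n, dist x y : ℝ) = n * dist x y := by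
    simp [Finset.sum_const, Finset.card_univ, nsmul_eq_mul]
  rw [Real.dist_eq]
  calc |f x - f y| ≤ L * ∑ i, dist (x i) (y i) := h x y
    _ ≤ L * (n * dist x y) := mul_le_mul_of_nonneg_left (h1.trans_eq h2) hL
    _ = L * n * dist x y := by ring

private lemma tau_pi {X : Type*} [MetricSpace X] [SecondCountableTopology X]
    [MeasurableSpace X] [BorelSpace X]
    (μ : Measure X) [IsProbabilityMeasure μ] (a : ℝ) (ha : 0 < a)
    (hT2 : ∀ ν : Measure X, IsProbabilityMeasure ν →
      transportCost (fun x y => edist x y ^ (2 : ℝ)) ν μ ≤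
        ENNReal.ofReal (1 / a) * relEntropy ν μ) :
    ∀ (n : ℕ) (L M : ℝ), 0 ≤ L → ∀ f : (Fin n → X) → ℝ,
      (∀ x, |f x| ≤ M) →
      (∀ x y, |f x - f y| ≤ L * ∑ i, dist (x i) (y i)) →
      ∫⁻ y, ENNReal.ofReal (Real.exp (⨅ x, (f x + a * ∑ i, dist (x i) (y i) ^ 2)))
          ∂(Measure.pi fun _ : Fin n => μ)
        ≤ ENNReal.ofReal (Real.exp (∫ x, f x ∂(Measure.pi fun _ : Fin n => μ))) := by
  intro n
  induction n with
  | zero =>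
    intro L M hL f hM hLip
    have hq : ∀ y : Fin 0 → X,
        (⨅ x : Fin 0 → X, (f x + a * ∑ i, dist (x i) (y i) ^ 2)) = f y := by
      intro y
      rw [ciInf_unique]
      have : (default : Fin 0 → X) = y := Subsingleton.elim _ _
      rw [this]
      simp
    simp_rw [hq]
    have hf_eq : ∀ y : Fin 0 → X, f y = f default := fun y =>
      congrArg f (Subsingleton.elim y default)
    calc ∫⁻ y, ENNReal.ofReal (Real.exp (f y)) ∂(Measure.pi fun _ : Fin 0 => μ)
        = ∫⁻ _y, ENNReal.ofReal (Real.exp (f default)) ∂(Measure.pi fun _ : Fin 0 => μ) := by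
          apply lintegral_congr
          intro y
          rw [hf_eq y]
      _ = ENNReal.ofReal (Real.exp (f default)) := by
          rw [lintegral_const]
          simp
      _ = ENNReal.ofReal (Real.exp (∫ x, f x ∂(Measure.pi fun _ : Fin 0 => μ))) := by
          congr 1
          have : ∫ x, f x ∂(Measure.pi fun _ : Fin 0 => μ)
              = ∫ _x, f default ∂(Measure.pi fun _ : Fin 0 => μ) :=
            integral_congr_ae (ae_of_all _ fun y => hf_eq y)
          rw [this, integral_const]
          simp
      _ ≤ ENNReal.ofReal (Real.exp (∫ x, f x ∂(Measure.pi fun _ : Fin 0 => μ))) := le_rfl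
  | succ n IH =>
    intro L M hL f hM hLip
    have hXne : Nonempty X := by
      by_contra h
      rw [not_nonempty_iff] at h
      have h1 : μ Set.univ = 1 := measure_univ
      rw [μ.eq_zero_of_isEmpty] at h1
      simp at h1
    set P : Measure (Fin n → X) := Measure.pi fun _ => μ with hP
    set m : Measure (Fin (n + 1) → X) := Measure.pi fun _ => μ with hm
    have hf_cont : Continuous f := cont_of_lipsum hL hLip
    have hbdd : ∀ y : Fin (n + 1) → X, BddBelow (Set.range fun x : Fin (n + 1) → X =>
        f x + a * ∑ i, dist (x i) (y i) ^ 2) := fun y =>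
      bddBelow_range_of_le (c := -M) fun x => by
        have h1 := (abs_le.1 (hM x)).1
        have h2 : (0:ℝ) ≤ ∑ i, dist (x i) (y i) ^ 2 :=
          Finset.sum_nonneg fun i _ => sq_nonneg _
        nlinarith
    set q : (Fin (n + 1) → X) → ℝ :=
      fun y => ⨅ x, (f x + a * ∑ i, dist (x i) (y i) ^ 2) with hq_def
    have hq_meas : Measurable q := by
      apply measurable_iInf_of_continuous
      · intro x
        exact continuous_const.add (continuous_const.mul (continuous_finset_sum _ fun i _ =>
          (Continuous.dist continuous_const (continuous_apply i)).pow 2))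
      · exact hbdd
    have MP : MeasurePreserving (MeasurableEquiv.piFinSuccAbove (fun _ : Fin (n + 1) => X) 0)
        m (μ.prod P) := measurePreserving_piFinSuccAbove (fun _ : Fin (n + 1) => μ) 0
    set e := MeasurableEquiv.piFinSuccAbove (fun _ : Fin (n + 1) => X) 0 with he
    have hsymm : ∀ p : X × (Fin n → X), e.symm p = Fin.cons p.1 p.2 := by
      intro p
      rw [he]
      simp_rw [MeasurableEquiv.piFinSuccAbove_symm_apply, Fin.insertNthEquiv,
        Equiv.coe_fn_mk, Fin.insertNth_zero']
    have hcons_c : ∀ x0 : X, Continuous fun xt : Fin n → X => (Fin.cons x0 xt : Fin (n + 1) → X) := by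
      intro x0
      apply continuous_pi
      intro j
      refine Fin.cases ?_ ?_ j
      · simpa using continuous_const
      · intro i
        simpa using continuous_apply i
    set g : X → (Fin n → X) → ℝ :=
      fun y0 xt => ⨅ x0 : X, (f (Fin.cons x0 xt) + a * dist x0 y0 ^ 2) with hg_def
    have hgbdd : ∀ (y0 : X) (xt : Fin n → X),
        BddBelow (Set.range fun x0 : X => f (Fin.cons x0 xt) + a * dist x0 y0 ^ 2) :=
      fun y0 xt => bddBelow_range_of_le (c := -M) fun x0 => by
        have h1 := (abs_le.1 (hM (Fin.cons x0 xt))).1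
        nlinarith [sq_nonneg (dist x0 y0)]
    have hg_lb : ∀ y0 xt, -M ≤ g y0 xt := fun y0 xt => le_ciInf fun x0 => by
      have h1 := (abs_le.1 (hM (Fin.cons x0 xt))).1
      nlinarith [sq_nonneg (dist x0 y0)]
    have hg_ub : ∀ y0 xt, g y0 xt ≤ M := fun y0 xt => by
      refine (ciInf_le (hgbdd y0 xt) y0).trans ?_
      simpa using (abs_le.1 (hM (Fin.cons y0 xt))).2
    have hg_abs : ∀ y0 xt, |g y0 xt| ≤ M := fun y0 xt => abs_le.2 ⟨hg_lb y0 xt, hg_ub y0 xt⟩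
    have hcons_sum : ∀ (x0 : X) (xt yt : Fin n → X),
        |f (Fin.cons x0 xt) - f (Fin.cons x0 yt)| ≤ L * ∑ i, dist (xt i) (yt i) := by
      intro x0 xt yt
      have h1 := hLip (Fin.cons x0 xt) (Fin.cons x0 yt)
      simpa [Fin.sum_univ_succ] using h1
    have hg_lip : ∀ y0 xt yt, |g y0 xt - g y0 yt| ≤ L * ∑ i, dist (xt i) (yt i) := by
      intro y0 xt yt
      have hsymm_sum : (∑ i, dist (yt i) (xt i)) = ∑ i, dist (xt i) (yt i) := by
        simp [dist_comm]
      have h1 : g y0 xt ≤ g y0 yt + L * ∑ i, dist (xt i) (yt i) :=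
        ciInf_le_ciInf_add (hgbdd y0 xt) _ fun x0 => by
          have := (abs_le.1 (hcons_sum x0 xt yt)).2
          linarith
      have h2 : g y0 yt ≤ g y0 xt + L * ∑ i, dist (xt i) (yt i) :=
        ciInf_le_ciInf_add (hgbdd y0 yt) _ fun x0 => by
          have := (abs_le.1 (hcons_sum x0 yt xt)).2
          rw [hsymm_sum] at this
          linarith
      rw [abs_le]
      constructor <;> linarith
    have hg_meas : ∀ y0, Measurable (g y0) := fun y0 => by
      apply measurable_iInf_of_continuous
      · intro x0
        exact (hf_cont.comp (hcons_c x0)).add continuous_const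
      · exact hgbdd y0
    have hIH : ∀ y0 : X,
        ∫⁻ yt, ENNReal.ofReal (Real.exp (⨅ xt, (g y0 xt + a * ∑ i, dist (xt i) (yt i) ^ 2))) ∂P
          ≤ ENNReal.ofReal (Real.exp (∫ xt, g y0 xt ∂P)) := fun y0 =>
      IH L M hL (g y0) (hg_abs y0) (hg_lip y0)
    have hdecomp : ∀ (y0 : X) (yt : Fin n → X),
        q (Fin.cons y0 yt) ≤ ⨅ xt : Fin n → X, (g y0 xt + a * ∑ i, dist (xt i) (yt i) ^ 2) := by
      intro y0 yt
      refine le_ciInf fun xt => ?_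
      have h1 : q (Fin.cons y0 yt) - a * ∑ i, dist (xt i) (yt i) ^ 2 ≤ g y0 xt := by
        refine le_ciInf fun x0 => ?_
        rw [sub_le_iff_le_add]
        have h2 := ciInf_le (hbdd (Fin.cons y0 yt)) (Fin.cons x0 xt)
        refine h2.trans (le_of_eq ?_)
        rw [Fin.sum_univ_succ]
        simp only [Fin.cons_zero, Fin.cons_succ]
        ring
      linarith
    set Ft : X → ℝ := fun x0 => ∫ xt, f (Fin.cons x0 xt) ∂P with hFt_def
    have hconsf_int : ∀ x0 : X, Integrable (fun xt => f (Fin.cons x0 xt)) P := fun x0 =>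
      integrable_of_abs_le ((hf_cont.comp (hcons_c x0)).measurable).aestronglyMeasurable
        (M := M) fun xt => hM _
    have hFt_abs : ∀ x0, |Ft x0| ≤ M := fun x0 => by
      rw [hFt_def]
      have h1 := norm_integral_le_of_norm_le_const
        (μ := P) (f := fun xt => f (Fin.cons x0 xt)) (C := M)
        (ae_of_all _ fun xt => by simpa [Real.norm_eq_abs] using hM (Fin.cons x0 xt))
      simpa [Real.norm_eq_abs, measure_univ] using h1
    have hFt_lip : ∀ x0 y0 : X, |Ft x0 - Ft y0| ≤ L * dist x0 y0 := by
      intro x0 y0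
      have hptw : ∀ xt : Fin n → X,
          |f (Fin.cons x0 xt) - f (Fin.cons y0 xt)| ≤ L * dist x0 y0 := fun xt => by
        have h1 := hLip (Fin.cons x0 xt) (Fin.cons y0 xt)
        simpa [Fin.sum_univ_succ] using h1
      rw [hFt_def]
      have h2 : Ft x0 - Ft y0 = ∫ xt, (f (Fin.cons x0 xt) - f (Fin.cons y0 xt)) ∂P := by
        rw [integral_sub (hconsf_int x0) (hconsf_int y0)]
      rw [hFt_def] at h2
      rw [h2]
      have h3 := norm_integral_le_of_norm_le_const
        (μ := P) (f := fun xt => f (Fin.cons x0 xt) - f (Fin.cons y0 xt)) (C := L * dist x0 y0)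
        (ae_of_all _ fun xt => by simpa [Real.norm_eq_abs] using hptw xt)
      simpa [Real.norm_eq_abs, measure_univ] using h3
    have hFt_cont : Continuous Ft := by
      refine (LipschitzWith.of_dist_le_mul (K := ⟨L, hL⟩) fun x y => ?_).continuous
      show dist (Ft x) (Ft y) ≤ L * dist x y
      rw [Real.dist_eq]
      exact hFt_lip x y
    have hbase := base_tau μ a ha hT2 Ft M hFt_cont hFt_abs
    have hGF : ∀ y0 : X, ∫ xt, g y0 xt ∂P ≤ ⨅ x0 : X, (Ft x0 + a * dist x0 y0 ^ 2) := by
      intro y0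
      refine le_ciInf fun x0 => ?_
      have hpt : ∀ xt, g y0 xt ≤ f (Fin.cons x0 xt) + a * dist x0 y0 ^ 2 := fun xt =>
        ciInf_le (hgbdd y0 xt) x0
      have hint1 : Integrable (g y0) P :=
        integrable_of_abs_le (hg_meas y0).aestronglyMeasurable (hg_abs y0)
      have hint2 : Integrable (fun xt => f (Fin.cons x0 xt) + a * dist x0 y0 ^ 2) P :=
        (hconsf_int x0).add (integrable_const _)
      have h4 := integral_mono hint1 hint2 hpt
      have h5 : ∫ xt, (f (Fin.cons x0 xt) + a * dist x0 y0 ^ 2) ∂P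
          = Ft x0 + a * dist x0 y0 ^ 2 := by
        rw [integral_add (hconsf_int x0) (integrable_const _), integral_const]
        simp [hFt_def, measure_univ]
      rw [h5] at h4
      exact h4
    have hqe_meas : Measurable fun y => ENNReal.ofReal (Real.exp (q y)) :=
      ENNReal.measurable_ofReal.comp (Real.measurable_exp.comp hq_meas)
    have hcomp : ∫⁻ y, ENNReal.ofReal (Real.exp (q y)) ∂m
        = ∫⁻ p, ENNReal.ofReal (Real.exp (q (e.symm p))) ∂(μ.prod P) :=
      ((MP.symm e).lintegral_comp hqe_meas).symm
    have hmain : ∫⁻ y, ENNReal.ofReal (Real.exp (q y)) ∂m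
        ≤ ENNReal.ofReal (Real.exp (∫ x0, Ft x0 ∂μ)) := by
      rw [hcomp]
      rw [lintegral_prod (fun p => ENNReal.ofReal (Real.exp (q (e.symm p))))
        ((hqe_meas.comp e.symm.measurable).aemeasurable)]
      calc ∫⁻ y0, ∫⁻ yt, ENNReal.ofReal (Real.exp (q (e.symm (y0, yt)))) ∂P ∂μ
          ≤ ∫⁻ y0, ENNReal.ofReal (Real.exp (⨅ x0, (Ft x0 + a * dist x0 y0 ^ 2))) ∂μ := by
            apply lintegral_mono
            intro y0
            calc ∫⁻ yt, ENNReal.ofReal (Real.exp (q (e.symm (y0, yt)))) ∂P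
                ≤ ∫⁻ yt, ENNReal.ofReal
                    (Real.exp (⨅ xt, (g y0 xt + a * ∑ i, dist (xt i) (yt i) ^ 2))) ∂P := by
                  apply lintegral_mono
                  intro yt
                  apply ENNReal.ofReal_le_ofReal
                  apply Real.exp_le_exp.2
                  rw [hsymm (y0, yt)]
                  exact hdecomp y0 yt
              _ ≤ ENNReal.ofReal (Real.exp (∫ xt, g y0 xt ∂P)) := hIH y0
              _ ≤ ENNReal.ofReal (Real.exp (⨅ x0, (Ft x0 + a * dist x0 y0 ^ 2))) := by
                  apply ENNReal.ofReal_le_ofReal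
                  exact Real.exp_le_exp.2 (hGF y0)
        _ ≤ ENNReal.ofReal (Real.exp (∫ x0, Ft x0 ∂μ)) := hbase
    have hint_eq : ∫ x0, Ft x0 ∂μ = ∫ x, f x ∂m := by
      have h1 : ∫ x, f x ∂m = ∫ p, f (e.symm p) ∂(μ.prod P) := ((MP.symm e).integral_comp' f).symm
      have h2 : Integrable (fun p : X × (Fin n → X) => f (e.symm p)) (μ.prod P) :=
        integrable_of_abs_le (hf_cont.measurable.comp e.symm.measurable).aestronglyMeasurable
          (M := M) fun p => hM _
      rw [h1, integral_prod _ h2]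
      apply integral_congr_ae
      refine ae_of_all _ fun x0 => ?_
      rw [hFt_def]
      apply integral_congr_ae
      refine ae_of_all _ fun xt => ?_
      show f (Fin.cons x0 xt) = f (e.symm (x0, xt))
      rw [hsymm (x0, xt)]
    rw [← hint_eq]
    exact hmain

/-- If `μ` satisfies Talagrand's inequality `T₂(1/a)` then the product measures `μ^⊗n` satisfy
dimension free Gaussian concentration with constants `b = 1` and `r₀ = √(log 2 / a)`. -/
theorem T2_implies_gaussian_dimFree_concentration
    {X : Type*} [MetricSpace X] [PolishSpace X] [MeasurableSpace X] [BorelSpace X]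
    (μ : Measure X) [IsProbabilityMeasure μ] (a : ℝ) (ha : 0 < a)
    (hT2 : ∀ ν : Measure X, IsProbabilityMeasure ν →
      transportCost (fun x y => edist x y ^ (2 : ℝ)) ν μ ≤
        ENNReal.ofReal (1 / a) * relEntropy ν μ) :
    ∀ n : ℕ, 1 ≤ n → ∀ A : Set (Fin n → X), MeasurableSet A →
      1 / 2 ≤ (Measure.pi fun _ : Fin n => μ) A →
      ∀ r : ℝ, Real.sqrt (Real.log 2 / a) ≤ r →
        1 - ENNReal.ofReal (Real.exp (-a * (r - Real.sqrt (Real.log 2 / a)) ^ 2)) ≤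
          (Measure.pi fun _ : Fin n => μ)
            {y | ∃ x ∈ A, Real.sqrt (∑ i, dist (y i) (x i) ^ 2) ≤ r} := by
  intro n hn A hA hμA r hr
  set P : Measure (Fin n → X) := Measure.pi fun _ : Fin n => μ with hPdef
  haveI hPprob : IsProbabilityMeasure P :=
    inferInstanceAs (IsProbabilityMeasure (Measure.pi fun _ : Fin n => μ))
  set r0 : ℝ := Real.sqrt (Real.log 2 / a) with hr0_def
  have hr0_nonneg : 0 ≤ r0 := Real.sqrt_nonneg _
  have hr_nonneg : 0 ≤ r := hr0_nonneg.trans hr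
  have hXne : Nonempty X := by
    by_contra h
    rw [not_nonempty_iff] at h
    have h1 : μ Set.univ = 1 := measure_univ
    rw [μ.eq_zero_of_isEmpty] at h1
    simp at h1
  have hAne : A.Nonempty := by
    rw [Set.nonempty_iff_ne_empty]
    intro hAe
    rw [hAe] at hμA
    rw [measure_empty] at hμA
    simp [ENNReal.div_eq_zero_iff] at hμA
  haveI : Nonempty A := hAne.to_subtype
  set F : (Fin n → X) → ℝ :=
    fun y : Fin n → X => ⨅ p : A, Real.sqrt (∑ i, dist (y i) ((p : Fin n → X) i) ^ 2) with hF_def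
  have hFbdd : ∀ y : Fin n → X, BddBelow (Set.range fun p : A =>
      Real.sqrt (∑ i, dist (y i) ((p : Fin n → X) i) ^ 2)) :=
    fun y => bddBelow_range_of_le (c := 0) fun p => Real.sqrt_nonneg _
  have hF_nonneg : ∀ y, 0 ≤ F y := fun y => le_ciInf fun p => Real.sqrt_nonneg _
  set Φ : (Fin n → X) → ℝ := fun y => min (F y) r with hΦ_def
  have hΦ_nonneg : ∀ y, 0 ≤ Φ y := fun y => le_min (hF_nonneg y) hr_nonneg
  have hΦ_le_r : ∀ y, Φ y ≤ r := fun y => min_le_right _ _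
  have hΦ_abs : ∀ y, |Φ y| ≤ r := fun y => abs_le.2 ⟨by linarith [hΦ_nonneg y], hΦ_le_r y⟩
  have hrho_tri : ∀ y y' x : Fin n → X,
      Real.sqrt (∑ i, dist (y i) (x i) ^ 2)
        ≤ Real.sqrt (∑ i, dist (y' i) (x i) ^ 2) + Real.sqrt (∑ i, dist (y i) (y' i) ^ 2) := by
    intro y y' x
    have h2 : ∑ i, dist (y i) (x i) ^ 2
        ≤ ∑ i, (dist (y i) (y' i) + dist (y' i) (x i)) ^ 2 :=
      Finset.sum_le_sum fun i _ => by
        have h1 := dist_triangle (y i) (y' i) (x i)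
        nlinarith [dist_nonneg (x := y i) (y := x i), dist_nonneg (x := y i) (y := y' i),
          dist_nonneg (x := y' i) (y := x i)]
    calc Real.sqrt (∑ i, dist (y i) (x i) ^ 2)
        ≤ Real.sqrt (∑ i, (dist (y i) (y' i) + dist (y' i) (x i)) ^ 2) := Real.sqrt_le_sqrt h2
      _ ≤ Real.sqrt (∑ i, dist (y i) (y' i) ^ 2) + Real.sqrt (∑ i, dist (y' i) (x i) ^ 2) :=
        sqrt_sum_sq_add_le _ _ (fun i => dist_nonneg) (fun i => dist_nonneg)
      _ = Real.sqrt (∑ i, dist (y' i) (x i) ^ 2) + Real.sqrt (∑ i, dist (y i) (y' i) ^ 2) := by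
        ring
  have hF_lip : ∀ y y', |F y - F y'| ≤ Real.sqrt (∑ i, dist (y i) (y' i) ^ 2) := by
    intro y y'
    have hs : Real.sqrt (∑ i, dist (y' i) (y i) ^ 2) = Real.sqrt (∑ i, dist (y i) (y' i) ^ 2) := by
      congr 1
      exact Finset.sum_congr rfl fun i _ => by rw [dist_comm]
    have h1 : F y ≤ F y' + Real.sqrt (∑ i, dist (y i) (y' i) ^ 2) :=
      ciInf_le_ciInf_add (hFbdd y) _ fun p => hrho_tri y y' (p : Fin n → X)
    have h2 : F y' ≤ F y + Real.sqrt (∑ i, dist (y i) (y' i) ^ 2) := by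
      have h3 := ciInf_le_ciInf_add (hFbdd y') _ fun p => hrho_tri y' y (p : Fin n → X)
      rwa [hs] at h3
    rw [abs_le]
    constructor <;> linarith
  have hΦ_lip2 : ∀ y y', |Φ y - Φ y'| ≤ Real.sqrt (∑ i, dist (y i) (y' i) ^ 2) := fun y y' =>
    abs_min_sub_min_le.trans (hF_lip y y')
  have hΦ_lipsum : ∀ y y', |Φ y - Φ y'| ≤ 1 * ∑ i, dist (y i) (y' i) := fun y y' => by
    rw [one_mul]
    exact (hΦ_lip2 y y').trans (sqrt_sum_sq_le_sum _ fun i => dist_nonneg)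
  have hΦ_cont : Continuous Φ := cont_of_lipsum (by norm_num) hΦ_lipsum
  have hΦ_meas : Measurable Φ := hΦ_cont.measurable
  set mΦ : ℝ := ∫ y, Φ y ∂P with hmΦ_def
  have hm_nonneg : 0 ≤ mΦ := integral_nonneg hΦ_nonneg
  have laplace : ∀ t : ℝ, ∫⁻ y, ENNReal.ofReal (Real.exp (t * Φ y)) ∂P
      ≤ ENNReal.ofReal (Real.exp (t * mΦ + t ^ 2 / (4 * a))) := by
    intro t
    have htau := tau_pi μ a ha hT2 n |t| (|t| * r) (abs_nonneg t) (fun y => t * Φ y)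
      (fun y => by rw [abs_mul]; exact mul_le_mul_of_nonneg_left (hΦ_abs y) (abs_nonneg t))
      (fun x y => by
        rw [show t * Φ x - t * Φ y = t * (Φ x - Φ y) by ring, abs_mul]
        exact mul_le_mul_of_nonneg_left (hΦ_lipsum x y |>.trans_eq (one_mul _)) (abs_nonneg t))
    have hQ : ∀ y, t * Φ y - t ^ 2 / (4 * a)
        ≤ ⨅ x : Fin n → X, (t * Φ x + a * ∑ i, dist (x i) (y i) ^ 2) := by
      intro y
      refine le_ciInf fun x => ?_
      set s := Real.sqrt (∑ i, dist (x i) (y i) ^ 2) with hs_def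
      have hs_nonneg : 0 ≤ s := Real.sqrt_nonneg _
      have hs_sq : s ^ 2 = ∑ i, dist (x i) (y i) ^ 2 :=
        Real.sq_sqrt (Finset.sum_nonneg fun i _ => sq_nonneg _)
      have h1 : |Φ x - Φ y| ≤ s := hΦ_lip2 x y
      have h2 : t * Φ y - t * Φ x ≤ |t| * s := by
        have habs : |t * Φ x - t * Φ y| ≤ |t| * s := by
          rw [show t * Φ x - t * Φ y = t * (Φ x - Φ y) by ring, abs_mul]
          exact mul_le_mul_of_nonneg_left h1 (abs_nonneg t)
        linarith [neg_abs_le (t * Φ x - t * Φ y)]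
      have h3 : 0 ≤ a * s ^ 2 - |t| * s + t ^ 2 / (4 * a) := by
        have h4 : 0 ≤ (2 * a * s - |t|) ^ 2 := sq_nonneg _
        have h5 : |t| ^ 2 = t ^ 2 := sq_abs t
        have h6 : a * s ^ 2 - |t| * s + t ^ 2 / (4 * a) = (2 * a * s - |t|) ^ 2 / (4 * a) := by
          field_simp
          nlinarith [h5]
        rw [h6]
        positivity
      rw [← hs_sq]
      nlinarith
    calc ∫⁻ y, ENNReal.ofReal (Real.exp (t * Φ y)) ∂P
        ≤ ∫⁻ y, ENNReal.ofReal (Real.exp (t ^ 2 / (4 * a)))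
            * ENNReal.ofReal (Real.exp
              (⨅ x : Fin n → X, (t * Φ x + a * ∑ i, dist (x i) (y i) ^ 2))) ∂P := by
          apply lintegral_mono
          intro y
          dsimp only
          rw [← ENNReal.ofReal_mul (Real.exp_pos (t ^ 2 / (4 * a))).le, ← Real.exp_add]
          apply ENNReal.ofReal_le_ofReal
          apply Real.exp_le_exp.2
          linarith [hQ y]
      _ = ENNReal.ofReal (Real.exp (t ^ 2 / (4 * a)))
            * ∫⁻ y, ENNReal.ofReal (Real.exp
              (⨅ x : Fin n → X, (t * Φ x + a * ∑ i, dist (x i) (y i) ^ 2))) ∂P :=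
          lintegral_const_mul' _ _ ENNReal.ofReal_ne_top
      _ ≤ ENNReal.ofReal (Real.exp (t ^ 2 / (4 * a)))
            * ENNReal.ofReal (Real.exp (∫ y, t * Φ y ∂P)) := mul_le_mul_right htau _
      _ = ENNReal.ofReal (Real.exp (t * mΦ + t ^ 2 / (4 * a))) := by
          rw [integral_const_mul, ← ENNReal.ofReal_mul (Real.exp_pos _).le, ← Real.exp_add]
          congr 2
          ring
  have hΦA : ∀ y ∈ A, Φ y = 0 := by
    intro y hy
    have h1 : F y ≤ 0 := by
      have h2 := ciInf_le (hFbdd y) ⟨y, hy⟩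
      simpa using h2
    have h3 : F y = 0 := le_antisymm h1 (hF_nonneg y)
    rw [hΦ_def]
    simp only [h3]
    exact min_eq_left hr_nonneg
  have hm_le_r0 : mΦ ≤ r0 := by
    have h1 : (2⁻¹ : ℝ≥0∞) ≤ ENNReal.ofReal (Real.exp (-(a * mΦ ^ 2))) := by
      calc (2⁻¹ : ℝ≥0∞) ≤ P A := by rw [← one_div]; exact hμA
        _ = ∫⁻ _y in A, 1 ∂P := (setLIntegral_one A).symm
        _ ≤ ∫⁻ y in A, ENNReal.ofReal (Real.exp (-(2 * a * mΦ) * Φ y)) ∂P := by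
            apply setLIntegral_mono' hA
            intro y hy
            rw [hΦA y hy]
            simp
        _ ≤ ∫⁻ y, ENNReal.ofReal (Real.exp (-(2 * a * mΦ) * Φ y)) ∂P :=
            setLIntegral_le_lintegral _ _
        _ ≤ ENNReal.ofReal (Real.exp (-(2 * a * mΦ) * mΦ + (-(2 * a * mΦ)) ^ 2 / (4 * a))) :=
            laplace _
        _ = ENNReal.ofReal (Real.exp (-(a * mΦ ^ 2))) := by
            congr 2
            field_simp
            ring
    have h2 : (2⁻¹ : ℝ) ≤ Real.exp (-(a * mΦ ^ 2)) := by
      have h2' : (2⁻¹ : ℝ≥0∞) = ENNReal.ofReal (2⁻¹ : ℝ) := by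
        rw [ENNReal.ofReal_inv_of_pos (by norm_num)]
        norm_num
      rw [h2'] at h1
      exact (ENNReal.ofReal_le_ofReal_iff (Real.exp_pos _).le).1 h1
    have h3 : a * mΦ ^ 2 ≤ Real.log 2 := by
      have h4 := Real.log_le_log (by norm_num) h2
      rw [Real.log_inv, Real.log_exp] at h4
      linarith
    calc mΦ = Real.sqrt (mΦ ^ 2) := (Real.sqrt_sq hm_nonneg).symm
      _ ≤ Real.sqrt (Real.log 2 / a) := Real.sqrt_le_sqrt (by rw [le_div_iff₀ ha]; linarith)
      _ = r0 := rfl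
  set t : ℝ := 2 * a * (r - mΦ) with ht_def
  have htr : mΦ ≤ r := hm_le_r0.trans hr
  have ht_nonneg : 0 ≤ t := by nlinarith
  set Bset : Set (Fin n → X) := {y | r ≤ Φ y} with hB_def
  have hB_meas : MeasurableSet Bset := measurableSet_le measurable_const hΦ_meas
  have hBbound : P Bset ≤ ENNReal.ofReal (Real.exp (-(a * (r - mΦ) ^ 2))) := by
    have hexp_id : Real.exp (t * r) * Real.exp (-(a * (r - mΦ) ^ 2))
        = Real.exp (t * mΦ + t ^ 2 / (4 * a)) := by
      rw [← Real.exp_add]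
      congr 1
      rw [ht_def]
      field_simp
      ring
    have h1 : ENNReal.ofReal (Real.exp (t * r)) * P Bset
        ≤ ENNReal.ofReal (Real.exp (t * r)) * ENNReal.ofReal (Real.exp (-(a * (r - mΦ) ^ 2))) := by
      calc ENNReal.ofReal (Real.exp (t * r)) * P Bset
          = ∫⁻ _y in Bset, ENNReal.ofReal (Real.exp (t * r)) ∂P := by
            rw [setLIntegral_const]
        _ ≤ ∫⁻ y in Bset, ENNReal.ofReal (Real.exp (t * Φ y)) ∂P := by
            apply setLIntegral_mono' hB_meas
            intro y hy
            apply ENNReal.ofReal_le_ofReal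
            apply Real.exp_le_exp.2
            exact mul_le_mul_of_nonneg_left hy ht_nonneg
        _ ≤ ∫⁻ y, ENNReal.ofReal (Real.exp (t * Φ y)) ∂P := setLIntegral_le_lintegral _ _
        _ ≤ ENNReal.ofReal (Real.exp (t * mΦ + t ^ 2 / (4 * a))) := laplace t
        _ = ENNReal.ofReal (Real.exp (t * r)) * ENNReal.ofReal (Real.exp (-(a * (r - mΦ) ^ 2))) := by
            rw [← ENNReal.ofReal_mul (Real.exp_pos (t * r)).le, hexp_id]
    exact (ENNReal.mul_le_mul_iff_right (by simp [Real.exp_pos]) ENNReal.ofReal_ne_top).1 h1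
  have hBbound2 : P Bset ≤ ENNReal.ofReal (Real.exp (-a * (r - r0) ^ 2)) := by
    refine hBbound.trans (ENNReal.ofReal_le_ofReal (Real.exp_le_exp.2 ?_))
    have hge : r - r0 ≤ r - mΦ := by linarith
    have hge0 : 0 ≤ r - r0 := by linarith
    have hsq : (r - r0) ^ 2 ≤ (r - mΦ) ^ 2 := by nlinarith
    nlinarith [mul_le_mul_of_nonneg_left hsq ha.le]
  have hsub : Bsetᶜ ⊆ {y | ∃ x ∈ A, Real.sqrt (∑ i, dist (y i) (x i) ^ 2) ≤ r} := by
    intro y hy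
    simp only [Set.mem_compl_iff, hB_def, Set.mem_setOf_eq, not_le] at hy
    have hF_lt : F y < r := by
      rcases min_lt_iff.1 hy with h | h
      · exact h
      · exact absurd h (lt_irrefl r)
    obtain ⟨p, hp⟩ := exists_lt_of_ciInf_lt hF_lt
    exact ⟨(p : Fin n → X), p.2, hp.le⟩
  calc 1 - ENNReal.ofReal (Real.exp (-a * (r - r0) ^ 2))
      ≤ 1 - P Bset := tsub_le_tsub_left hBbound2 1
    _ = P Bsetᶜ := by
        rw [measure_compl hB_meas (measure_ne_top P _), measure_univ]
    _ ≤ P {y | ∃ x ∈ A, Real.sqrt (∑ i, dist (y i) (x i) ^ 2) ≤ r} := measure_mono hsub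
end
end

section
/- (Marton's argument.) Let (X,ρ) be a Polish metric space and let μ be a probability measure on X satisfying T₁(C) for some C > 0, i.e. W₁(ν,μ) ≤ √(C·H(ν|μ)) for every probability measure ν on X. Then for every measurable A ⊆ X with μ(A) ≥ 1/2, one has μ(Aʳ) ≥ 1 − exp(−C⁻¹(r−r₀)²) for all r ≥ r₀, where r₀ = √(C·log 2) and Aʳ = {x ∈ X : ∃ x̄ ∈ A with ρ(x,x̄) ≤ r}. -/
open MeasureTheory Filter Set
open scoped ENNReal NNReal Topology Pointwise Classical

noncomputable section

open ProbabilityTheory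

lemma isProb_of_fst {α : Type*} [MeasurableSpace α] {π : Measure (α × α)} {ν : Measure α}
    [IsProbabilityMeasure ν] (h : π.fst = ν) : IsProbabilityMeasure π := by
  constructor
  rw [← Measure.fst_univ, h, measure_univ]

lemma condMeasure_prob {α : Type*} [MeasurableSpace α] (μ : Measure α) [IsProbabilityMeasure μ]
    {A : Set α} (h0 : μ A ≠ 0) :
    IsProbabilityMeasure ((μ A)⁻¹ • μ.restrict A) := by
  constructor
  rw [Measure.smul_apply, Measure.restrict_apply MeasurableSet.univ, univ_inter, smul_eq_mul,
    ENNReal.inv_mul_cancel h0 (measure_ne_top μ A)]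

lemma condMeasure_null_compl {α : Type*} [MeasurableSpace α] (μ : Measure α)
    {A : Set α} (hA : MeasurableSet A) :
    ((μ A)⁻¹ • μ.restrict A) Aᶜ = 0 := by
  rw [Measure.smul_apply, Measure.restrict_apply hA.compl, Set.compl_inter_self]
  simp

lemma relEntropy_cond {α : Type*} [MeasurableSpace α] (μ : Measure α) [IsProbabilityMeasure μ]
    {A : Set α} (hA : MeasurableSet A) (h0 : μ A ≠ 0) :
    relEntropy ((μ A)⁻¹ • μ.restrict A) μ = ENNReal.ofReal (-Real.log (μ A).toReal) := by
  set ν : Measure α := (μ A)⁻¹ • μ.restrict A with hν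
  haveI : IsProbabilityMeasure ν := condMeasure_prob μ h0
  have hac : ν ≪ μ := Measure.AbsolutelyContinuous.smul_left
    (Measure.absolutelyContinuous_of_le Measure.restrict_le_self) _
  have hrn : ν.rnDeriv μ =ᵐ[μ] (μ A)⁻¹ • (μ.restrict A).rnDeriv μ :=
    Measure.rnDeriv_smul_left_of_ne_top (μ.restrict A) μ (by simpa using h0)
  have hrn2 : ν.rnDeriv μ =ᵐ[μ] fun x => (μ A)⁻¹ * A.indicator 1 x := by
    filter_upwards [hrn, Measure.rnDeriv_restrict_self μ hA] with x h1 h2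
    rw [h1, Pi.smul_apply, h2, smul_eq_mul]
  have hAν : ∀ᵐ x ∂ν, x ∈ A := by
    rw [ae_iff]
    have h' : {x | ¬ x ∈ A} = Aᶜ := rfl
    rw [h', hν]
    exact condMeasure_null_compl μ hA
  have hlog : (fun x => Real.log ((ν.rnDeriv μ x).toReal))
      =ᵐ[ν] fun _ => -Real.log (μ A).toReal := by
    filter_upwards [hac.ae_eq hrn2, hAν] with x h1 h2
    rw [h1]
    simp only [Set.indicator_of_mem h2, Pi.one_apply, mul_one]
    rw [ENNReal.toReal_inv, Real.log_inv]
  have hInt : Integrable (fun x => Real.log ((ν.rnDeriv μ x).toReal)) ν :=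
    (integrable_const _).congr hlog.symm
  rw [relEntropy, if_pos ⟨hac, hInt⟩, integral_congr_ae hlog]
  simp

lemma transport_triangle {X : Type*} [MetricSpace X] [PolishSpace X] [MeasurableSpace X]
    [BorelSpace X] (μ ν₁ ν₂ : Measure X) [IsProbabilityMeasure μ] [IsProbabilityMeasure ν₁]
    [IsProbabilityMeasure ν₂] (π₁ π₂ : Measure (X × X))
    (h₁f : π₁.fst = ν₁) (h₁s : π₁.snd = μ) (h₂f : π₂.fst = μ) (h₂s : π₂.snd = ν₂) :
    transportCost (fun x y => edist x y) ν₁ ν₂ ≤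
      ∫⁻ p, edist p.1 p.2 ∂π₁ + ∫⁻ p, edist p.1 p.2 ∂π₂ := by
  have hπ₁ : IsProbabilityMeasure π₁ := isProb_of_fst h₁f
  have hπ₂ : IsProbabilityMeasure π₂ := isProb_of_fst h₂f
  set π₁' : Measure (X × X) := π₁.map Prod.swap with hπ₁'def
  have hπ₁'i : IsProbabilityMeasure π₁' := Measure.isProbabilityMeasure_map measurable_swap.aemeasurable
  have h₁'f : π₁'.fst = μ := by rw [hπ₁'def, Measure.fst_map_swap, h₁s]
  have h₁'s : π₁'.snd = ν₁ := by rw [hπ₁'def, Measure.snd_map_swap, h₁f]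
  haveI : Nonempty X := Measure.nonempty_of_neZero μ
  set κ₁ := π₁'.condKernel with hκ₁
  set κ₂ := π₂.condKernel with hκ₂
  have hd₁ : μ ⊗ₘ κ₁ = π₁' := by rw [← h₁'f]; exact π₁'.disintegrate _
  have hd₂ : μ ⊗ₘ κ₂ = π₂ := by rw [← h₂f]; exact π₂.disintegrate _
  set m : Measure (X × (X × X)) := μ ⊗ₘ (κ₁ ×ₖ κ₂) with hm
  set π : Measure (X × X) := m.map Prod.snd with hπ
  have hmeas2 : Measurable (Prod.snd : X × (X × X) → X × X) := measurable_snd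
  have hfst : π.fst = ν₁ := by
    ext s hs
    rw [Measure.fst_apply hs, hπ, Measure.map_apply hmeas2 (measurable_fst hs)]
    rw [hm, Measure.compProd_apply (hmeas2 (measurable_fst hs))]
    have : ∀ x : X, (κ₁ ×ₖ κ₂) x (Prod.mk x ⁻¹' (Prod.snd ⁻¹' (Prod.fst ⁻¹' s)))
        = κ₁ x s := by
      intro x
      have : (Prod.mk x ⁻¹' (Prod.snd ⁻¹' (Prod.fst ⁻¹' s))) = s ×ˢ (univ : Set X) := by
        ext p; simp
      rw [this, Kernel.prod_apply, Measure.prod_prod, measure_univ, mul_one]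
    simp_rw [this]
    have : ν₁ s = π₁'.snd s := by rw [h₁'s]
    rw [this, Measure.snd_apply hs, ← hd₁,
      Measure.compProd_apply (measurable_snd hs)]
    congr with a
  have hsnd : π.snd = ν₂ := by
    ext s hs
    rw [Measure.snd_apply hs, hπ, Measure.map_apply hmeas2 (measurable_snd hs)]
    rw [hm, Measure.compProd_apply (hmeas2 (measurable_snd hs))]
    have : ∀ x : X, (κ₁ ×ₖ κ₂) x (Prod.mk x ⁻¹' (Prod.snd ⁻¹' (Prod.snd ⁻¹' s)))
        = κ₂ x s := by
      intro x
      have : (Prod.mk x ⁻¹' (Prod.snd ⁻¹' (Prod.snd ⁻¹' s))) = (univ : Set X) ×ˢ s := by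
        ext p; simp
      rw [this, Kernel.prod_apply, Measure.prod_prod, measure_univ, one_mul]
    simp_rw [this]
    have : ν₂ s = π₂.snd s := by rw [h₂s]
    rw [this, Measure.snd_apply hs, ← hd₂,
      Measure.compProd_apply (measurable_snd hs)]
    congr with a
  have hcost : ∫⁻ p, edist p.1 p.2 ∂π ≤ ∫⁻ p, edist p.1 p.2 ∂π₁ + ∫⁻ p, edist p.1 p.2 ∂π₂ := by
    have he : Measurable (fun p : X × X => edist p.1 p.2) := measurable_edist
    rw [hπ, lintegral_map (by exact he) hmeas2]
    have step1 : ∫⁻ q, edist q.2.1 q.2.2 ∂m ≤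
        ∫⁻ q, (edist q.2.1 q.1 + edist q.1 q.2.2) ∂m := by
      refine lintegral_mono fun q => ?_
      exact edist_triangle _ _ _
    refine le_trans step1 ?_
    have hm1 : Measurable (fun q : X × (X × X) => edist q.2.1 q.1) :=
      measurable_edist.comp ((measurable_fst.comp measurable_snd).prodMk measurable_fst)
    have hm2 : Measurable (fun q : X × (X × X) => edist q.1 q.2.2) :=
      measurable_edist.comp (measurable_fst.prodMk (measurable_snd.comp measurable_snd))
    rw [lintegral_add_left hm1]
    gcongr
    · rw [hm, Measure.lintegral_compProd hm1]
      have : ∀ x : X, ∫⁻ q, edist q.1 x ∂((κ₁ ×ₖ κ₂) x) = ∫⁻ y, edist y x ∂(κ₁ x) := by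
        intro x
        have hg : Measurable fun q : X × X => edist q.1 x :=
          measurable_edist.comp (measurable_fst.prodMk measurable_const)
        rw [Kernel.lintegral_prod _ _ _ hg]
        simp
      simp_rw [this]
      have hg2 : Measurable fun p : X × X => edist p.2 p.1 :=
        measurable_edist.comp (measurable_snd.prodMk measurable_fst)
      have : ∫⁻ x, ∫⁻ y, edist y x ∂(κ₁ x) ∂μ = ∫⁻ p, edist p.2 p.1 ∂(μ ⊗ₘ κ₁) := by
        rw [Measure.lintegral_compProd hg2]
      rw [this, hd₁, hπ₁'def, lintegral_map hg2 measurable_swap]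
      simp
    · rw [hm, Measure.lintegral_compProd hm2]
      have : ∀ x : X, ∫⁻ q, edist x q.2 ∂((κ₁ ×ₖ κ₂) x) = ∫⁻ y, edist x y ∂(κ₂ x) := by
        intro x
        have hg : Measurable fun q : X × X => edist x q.2 :=
          measurable_edist.comp (measurable_const.prodMk measurable_snd)
        rw [Kernel.lintegral_prod _ _ _ hg]
        simp
      simp_rw [this]
      have : ∫⁻ x, ∫⁻ y, edist x y ∂(κ₂ x) ∂μ = ∫⁻ p, edist p.1 p.2 ∂(μ ⊗ₘ κ₂) := by
        rw [Measure.lintegral_compProd measurable_edist]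
      rw [this, hd₂]
  refine le_trans ?_ hcost
  exact iInf₂_le π ⟨hfst, hsnd⟩

lemma cost_le_of_T1 {X : Type*} [MetricSpace X] [MeasurableSpace X]
    (μ : Measure X) [IsProbabilityMeasure μ] (C : ℝ) (hC : 0 < C)
    (hT1 : ∀ ν : Measure X, IsProbabilityMeasure ν →
      transportCost (fun x y => edist x y) ν μ ≤
        (ENNReal.ofReal C * relEntropy ν μ) ^ (1 / 2 : ℝ))
    {A : Set X} (hA : MeasurableSet A) (h0 : μ A ≠ 0) :
    transportCost (fun x y => edist x y) ((μ A)⁻¹ • μ.restrict A) μ ≤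
      ENNReal.ofReal (Real.sqrt (C * (-Real.log (μ A).toReal))) := by
  haveI := condMeasure_prob μ h0
  have h1 : (μ A).toReal ≤ 1 := by
    refine ENNReal.toReal_le_of_le_ofReal one_pos.le ?_
    simpa using prob_le_one (μ := μ) (s := A)
  have h2 : 0 ≤ C * (-Real.log (μ A).toReal) :=
    mul_nonneg hC.le (neg_nonneg.2 (Real.log_nonpos ENNReal.toReal_nonneg h1))
  refine le_trans (hT1 _ inferInstance) ?_
  rw [relEntropy_cond μ hA h0, ← ENNReal.ofReal_mul hC.le,
    ENNReal.ofReal_rpow_of_nonneg h2 (by norm_num), ← Real.sqrt_eq_rpow]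

/-- Marton's argument: if `μ` satisfies `T₁(C)` then `μ` has Gaussian concentration with
constants `r₀ = √(C·log 2)` and rate `C⁻¹`. -/
theorem marton_T1_implies_concentration
    {X : Type*} [MetricSpace X] [PolishSpace X] [MeasurableSpace X] [BorelSpace X]
    (μ : Measure X) [IsProbabilityMeasure μ] (C : ℝ) (hC : 0 < C)
    (hT1 : ∀ ν : Measure X, IsProbabilityMeasure ν →
      transportCost (fun x y => edist x y) ν μ ≤
        (ENNReal.ofReal C * relEntropy ν μ) ^ (1 / 2 : ℝ)) :
    ∀ A : Set X, MeasurableSet A → 1 / 2 ≤ μ A →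
      ∀ r : ℝ, Real.sqrt (C * Real.log 2) ≤ r →
        1 - ENNReal.ofReal (Real.exp (-C⁻¹ * (r - Real.sqrt (C * Real.log 2)) ^ 2)) ≤
          μ {x | ∃ y ∈ A, dist x y ≤ r} := by
  intro A hAmeas hA2 r hr
  set r₀ := Real.sqrt (C * Real.log 2) with hr₀def
  have hr₀0 : 0 ≤ r₀ := Real.sqrt_nonneg _
  have hr0 : 0 ≤ r := le_trans hr₀0 hr
  set B := {x : X | ENNReal.ofReal r ≤ EMetric.infEdist x A} with hBdef
  have hBmeas : MeasurableSet B :=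
    measurableSet_le measurable_const EMetric.continuous_infEdist.measurable
  have hsub : {x | ∃ y ∈ A, dist x y ≤ r}ᶜ ⊆ B := by
    intro x hx
    simp only [mem_compl_iff, mem_setOf_eq, not_exists, not_and] at hx
    refine EMetric.le_infEdist.2 fun y hy => ?_
    rw [edist_dist]
    exact ENNReal.ofReal_le_ofReal (le_of_lt (lt_of_not_ge (hx y hy)))
  have haA : μ A ≠ 0 := by
    intro h
    rw [h] at hA2
    simp at hA2
  have key : μ B ≤ ENNReal.ofReal (Real.exp (-C⁻¹ * (r - r₀) ^ 2)) := by
    rcases eq_or_ne (μ B) 0 with h0 | h0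
    · rw [h0]; exact zero_le
    set ν₁ : Measure X := (μ A)⁻¹ • μ.restrict A with hν₁def
    set ν₂ : Measure X := (μ B)⁻¹ • μ.restrict B with hν₂def
    haveI hp₁ : IsProbabilityMeasure ν₁ := condMeasure_prob μ haA
    haveI hp₂ : IsProbabilityMeasure ν₂ := condMeasure_prob μ h0
    set aR := (μ A).toReal with haRdef
    set bR := (μ B).toReal with hbRdef
    have hbRpos : 0 < bR := ENNReal.toReal_pos h0 (measure_ne_top μ B)
    have hbR1 : bR ≤ 1 := by
      rw [hbRdef]
      exact ENNReal.toReal_le_of_le_ofReal one_pos.le (by simpa using prob_le_one (μ := μ) (s := B))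
    have hlogb : 0 ≤ -Real.log bR := by
      simp only [neg_nonneg]
      exact Real.log_nonpos hbRpos.le hbR1
    set s := Real.sqrt (C * (-Real.log bR)) with hsdef
    have hs0 : 0 ≤ s := Real.sqrt_nonneg _
    -- upper bound on cost ν₁ to μ
    have haR2 : (1:ℝ)/2 ≤ aR := by
      rw [haRdef]
      have := ENNReal.toReal_mono (measure_ne_top μ A) hA2
      simpa using this
    have hcost₁ : transportCost (fun x y => edist x y) ν₁ μ ≤ ENNReal.ofReal r₀ := by
      refine le_trans (cost_le_of_T1 μ C hC hT1 hAmeas haA) ?_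
      refine ENNReal.ofReal_le_ofReal ?_
      rw [hr₀def]
      refine Real.sqrt_le_sqrt ?_
      have h1 : Real.log (1/2 : ℝ) ≤ Real.log aR :=
        Real.log_le_log (by norm_num) haR2
      have h2 : Real.log (1/2 : ℝ) = -Real.log 2 := by
        rw [one_div, Real.log_inv]
      nlinarith [hC.le]
    have hcost₂ : transportCost (fun x y => edist x y) ν₂ μ ≤ ENNReal.ofReal s :=
      cost_le_of_T1 μ C hC hT1 hBmeas h0
    -- lower bound
    have hlb : ENNReal.ofReal r ≤ transportCost (fun x y => edist x y) ν₁ ν₂ := by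
      refine le_iInf fun π => le_iInf fun hπ => ?_
      obtain ⟨hf, hs'⟩ := hπ
      haveI : IsProbabilityMeasure π := isProb_of_fst hf
      have hnull : π ((A ×ˢ B)ᶜ) = 0 := by
        have hsub2 : (A ×ˢ B)ᶜ ⊆ (Aᶜ ×ˢ (univ : Set X)) ∪ ((univ : Set X) ×ˢ Bᶜ) := by
          intro p hp
          simp only [mem_compl_iff, mem_prod, mem_union, mem_univ, true_and, and_true] at *
          tauto
        refine le_antisymm (le_trans (measure_mono hsub2)
          (le_trans (measure_union_le _ _) ?_)) (zero_le)
        have e1 : π (Aᶜ ×ˢ (univ : Set X)) = ν₁ Aᶜ := by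
          rw [← hf, Measure.fst_apply hAmeas.compl]
          congr 1
          ext p; simp
        have e2 : π ((univ : Set X) ×ˢ Bᶜ) = ν₂ Bᶜ := by
          rw [← hs', Measure.snd_apply hBmeas.compl]
          congr 1
          ext p; simp
        rw [e1, e2, hν₁def, hν₂def, condMeasure_null_compl μ hAmeas,
          condMeasure_null_compl μ hBmeas, add_zero]
      have hfull : π (A ×ˢ B) = 1 := by
        have h' := measure_add_measure_compl (μ := π) (hAmeas.prod hBmeas)
        rw [hnull, add_zero, measure_univ] at h'
        exact h'
      calc ENNReal.ofReal r = ENNReal.ofReal r * π (A ×ˢ B) := by rw [hfull, mul_one]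
      _ = ∫⁻ p, (A ×ˢ B).indicator (fun _ => ENNReal.ofReal r) p ∂π := by
          rw [lintegral_indicator_const (hAmeas.prod hBmeas)]
      _ ≤ ∫⁻ p, edist p.1 p.2 ∂π := by
          refine lintegral_mono fun p => ?_
          by_cases hp : p ∈ A ×ˢ B
          · rw [Set.indicator_of_mem hp]
            obtain ⟨hp1, hp2⟩ := hp
            calc ENNReal.ofReal r ≤ EMetric.infEdist p.2 A := hp2
            _ ≤ edist p.2 p.1 := EMetric.infEdist_le_edist_of_mem hp1
            _ = edist p.1 p.2 := edist_comm _ _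
          · rw [Set.indicator_of_notMem hp]; exact zero_le
    -- triangle
    have htri : transportCost (fun x y => edist x y) ν₁ ν₂ ≤
        ENNReal.ofReal r₀ + ENNReal.ofReal s := by
      refine ENNReal.le_of_forall_pos_le_add fun ε hε _ => ?_
      have hε2 : ((ε : ℝ≥0∞) / 2) ≠ 0 := by
        simp [ENNReal.div_eq_zero_iff, hε.ne']
      have hlt₁ : transportCost (fun x y => edist x y) ν₁ μ <
          ENNReal.ofReal r₀ + (ε : ℝ≥0∞) / 2 :=
        lt_of_le_of_lt hcost₁ (ENNReal.lt_add_right ENNReal.ofReal_ne_top hε2)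
      have hlt₂ : transportCost (fun x y => edist x y) ν₂ μ <
          ENNReal.ofReal s + (ε : ℝ≥0∞) / 2 :=
        lt_of_le_of_lt hcost₂ (ENNReal.lt_add_right ENNReal.ofReal_ne_top hε2)
      rw [transportCost, iInf_lt_iff] at hlt₁ hlt₂
      obtain ⟨π₁, h₁⟩ := hlt₁
      rw [iInf_lt_iff] at h₁
      obtain ⟨⟨h₁f, h₁s⟩, hI₁⟩ := h₁
      obtain ⟨π₂', h₂⟩ := hlt₂
      rw [iInf_lt_iff] at h₂
      obtain ⟨⟨h₂f, h₂s⟩, hI₂⟩ := h₂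
      set π₂ : Measure (X × X) := π₂'.map Prod.swap with hπ₂def
      have h₂f' : π₂.fst = μ := by rw [hπ₂def, Measure.fst_map_swap, h₂s]
      have h₂s' : π₂.snd = ν₂ := by rw [hπ₂def, Measure.snd_map_swap, h₂f]
      have hIeq : ∫⁻ p, edist p.1 p.2 ∂π₂ = ∫⁻ p, edist p.1 p.2 ∂π₂' := by
        rw [hπ₂def, lintegral_map measurable_edist measurable_swap]
        simp only [Prod.fst_swap, Prod.snd_swap]
        congr with p
        exact edist_comm _ _
      calc transportCost (fun x y => edist x y) ν₁ ν₂ ≤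
          ∫⁻ p, edist p.1 p.2 ∂π₁ + ∫⁻ p, edist p.1 p.2 ∂π₂ :=
            transport_triangle μ ν₁ ν₂ π₁ π₂ h₁f h₁s h₂f' h₂s'
      _ ≤ (ENNReal.ofReal r₀ + (ε : ℝ≥0∞) / 2) + (ENNReal.ofReal s + (ε : ℝ≥0∞) / 2) := by
            rw [hIeq]
            exact add_le_add hI₁.le hI₂.le
      _ = ENNReal.ofReal r₀ + ENNReal.ofReal s + (ε : ℝ≥0∞) := by
            rw [add_add_add_comm, ENNReal.add_halves]
    -- combine
    have hr_le : r ≤ r₀ + s := by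
      have h' : ENNReal.ofReal r ≤ ENNReal.ofReal (r₀ + s) := by
        rw [ENNReal.ofReal_add hr₀0 hs0]
        exact le_trans hlb htri
      exact (ENNReal.ofReal_le_ofReal_iff (by positivity)).1 h'
    have h2' : r - r₀ ≤ s := by linarith
    have h3 : (r - r₀) ^ 2 ≤ C * (-Real.log bR) := by
      have hsq : s ^ 2 = C * (-Real.log bR) := Real.sq_sqrt (by positivity)
      nlinarith [sub_nonneg.2 hr]
    have h4 : Real.log bR ≤ -C⁻¹ * (r - r₀) ^ 2 := by
      have h5 : (r - r₀) ^ 2 / C ≤ -Real.log bR := (div_le_iff₀ hC).2 (by linarith [h3])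
      have h6 : -C⁻¹ * (r - r₀) ^ 2 = -((r - r₀) ^ 2 / C) := by
        field_simp
      linarith
    have h7 : bR ≤ Real.exp (-C⁻¹ * (r - r₀) ^ 2) := by
      rw [← Real.exp_log hbRpos]
      exact Real.exp_le_exp.2 h4
    calc μ B = ENNReal.ofReal bR := (ENNReal.ofReal_toReal (measure_ne_top μ B)).symm
    _ ≤ _ := ENNReal.ofReal_le_ofReal h7
  have hcover : (1 : ℝ≥0∞) ≤ μ {x | ∃ y ∈ A, dist x y ≤ r} +
      ENNReal.ofReal (Real.exp (-C⁻¹ * (r - r₀) ^ 2)) := by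
    calc (1 : ℝ≥0∞) = μ univ := measure_univ.symm
    _ ≤ μ ({x | ∃ y ∈ A, dist x y ≤ r} ∪ B) := by
        refine measure_mono fun x _ => ?_
        by_cases hx : x ∈ {x | ∃ y ∈ A, dist x y ≤ r}
        · exact Or.inl hx
        · exact Or.inr (hsub hx)
    _ ≤ μ {x | ∃ y ∈ A, dist x y ≤ r} + μ B := measure_union_le _ _
    _ ≤ _ := add_le_add le_rfl key
  exact tsub_le_iff_right.2 hcover
end
end

section
/- Let (X,ρ) be a Polish metric space and μ a probability measure on X with finite second moment. For n ≥ 1 let Fₙ(x) = W₂(L_n^x, μ) on Xⁿ, where L_n^x = n⁻¹ Σᵢ₌₁ⁿ δ_{xⁱ}. Then for every a ∈ Xⁿ with Fₙ(a) > 0: Σᵢ₌₁ⁿ |∇ᵢ⁻Fₙ|²(a) ≤ 1/n, where |∇ᵢ⁻Fₙ|(a) = limsup_{z→aⁱ} [Fₙ(a¹,…,z,…,aⁿ) − Fₙ(a)]₊ / ρ(z,aⁱ) is the subgradient norm in the i-th coordinate (z replacing aⁱ), with [t]₊ = max(t,0). -/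
open MeasureTheory Filter Set
open scoped ENNReal NNReal Topology Pointwise Classical

noncomputable section

lemma my_real_rpow_two (x : ℝ) : x ^ (2:ℝ) = x ^ (2:ℕ) := by
  rw [← Real.rpow_natCast]; norm_num


lemma my_sqrt_add_le {t u : ℝ} (ht : 0 < t) (hu : 0 ≤ u) :
    Real.sqrt (t + u) ≤ Real.sqrt t + u / (2 * Real.sqrt t) := by
  have hs : 0 < Real.sqrt t := Real.sqrt_pos.2 ht
  have h1 : Real.sqrt t ^ 2 = t := Real.sq_sqrt ht.le
  rw [show Real.sqrt t + u / (2 * Real.sqrt t)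
      = Real.sqrt ((Real.sqrt t + u / (2 * Real.sqrt t)) ^ 2) from
      (Real.sqrt_sq (by positivity)).symm]
  apply Real.sqrt_le_sqrt
  have key : (Real.sqrt t + u / (2 * Real.sqrt t)) ^ 2
      = Real.sqrt t ^ 2 + u + (u / (2 * Real.sqrt t)) ^ 2 := by
    field_simp
    nlinarith [h1]
  rw [key, h1]
  nlinarith [sq_nonneg (u / (2 * Real.sqrt t))]

lemma my_limsup_sq_le {α : Type*} {l : Filter α} {u : α → ℝ} (hu : ∀ x, 0 ≤ u x)
    {c : ℝ} (hc : 0 ≤ c) (h : ∀ δ : ℝ, 0 < δ → ∀ᶠ x in l, u x ≤ c + δ) :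
    (Filter.limsup u l) ^ 2 ≤ c ^ 2 := by
  rcases eq_or_neBot l with rfl | hne
  · have hb : Filter.limsup u (⊥ : Filter α) = 0 := by
      rw [Filter.limsup_eq]; simp [Real.sInf_of_not_bddBelow]
    rw [hb]
    simpa using sq_nonneg c
  · have h0 : 0 ≤ Filter.limsup u l := by
      rw [Filter.limsup_eq]
      apply Real.sInf_nonneg
      intro x hx
      simp only [Set.mem_setOf_eq] at hx
      rcases hx.exists with ⟨y, hy⟩
      exact le_trans (hu y) hy
    have hub : Filter.limsup u l ≤ c := by
      have cob : Filter.IsCoboundedUnder (· ≤ ·) l u :=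
        Filter.isCoboundedUnder_le_of_eventually_le l (x := 0) (Filter.Eventually.of_forall hu)
      have hle : ∀ δ : ℝ, 0 < δ → Filter.limsup u l ≤ c + δ := fun δ hδ =>
        Filter.limsup_le_of_le cob (h δ hδ)
      linarith [le_of_forall_pos_le_add hle]
    exact pow_le_pow_left₀ h0 hub 2

lemma my_decomp {X : Type*} [MetricSpace X] [SecondCountableTopology X] [MeasurableSpace X]
    [BorelSpace X] {n : ℕ} (hn : n ≠ 0) (a : Fin n → X) (π : Measure (X × X))
    (hfst : π.fst = empMeasure a) :
    ∃ ms : Fin n → Measure X,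
      (∀ j, IsProbabilityMeasure (ms j)) ∧
      (∑ j, (n : ℝ≥0∞)⁻¹ • ms j) = π.snd ∧
      ∑ j, (n : ℝ≥0∞)⁻¹ * ∫⁻ y, edist (a j) y ^ (2:ℝ) ∂(ms j)
        ≤ ∫⁻ p, edist p.1 p.2 ^ (2:ℝ) ∂π := by
  classical
  have hn' : (n : ℝ≥0∞) ≠ 0 := Nat.cast_ne_zero.2 hn
  have hnt : (n : ℝ≥0∞) ≠ ⊤ := ENNReal.natCast_ne_top n
  set mult : X → ℕ := fun s => (Finset.univ.filter (fun k : Fin n => a k = s)).card with hmult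
  set ν : X → Measure X := fun s => (π.restrict ({s} ×ˢ (univ : Set X))).snd with hν
  have hνval : ∀ s : X, ∀ E : Set X, MeasurableSet E → ν s E = π ({s} ×ˢ E) := by
    intro s E hE
    rw [hν]
    rw [Measure.snd_apply hE, Measure.restrict_apply (measurable_snd hE)]
    congr 1
    ext p
    simp only [Set.mem_inter_iff, Set.mem_preimage, Set.mem_prod, Set.mem_singleton_iff,
      Set.mem_univ, and_true]
    tauto
  have hπs : ∀ s : X, π ({s} ×ˢ (univ : Set X)) = (mult s : ℝ≥0∞) * (n : ℝ≥0∞)⁻¹ := by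
    intro s
    have he : ({s} ×ˢ (univ : Set X)) = Prod.fst ⁻¹' {s} := by
      ext p
      simp only [Set.mem_prod, Set.mem_preimage, Set.mem_singleton_iff, Set.mem_univ, and_true]
    rw [he, ← Measure.fst_apply (measurableSet_singleton s), hfst]
    simp only [empMeasure, Measure.smul_apply, Measure.finset_sum_apply,
      Measure.dirac_apply' _ (measurableSet_singleton s), Set.indicator_apply,
      Set.mem_singleton_iff, Pi.one_apply, smul_eq_mul]
    rw [Finset.sum_boole]
    rw [mul_comm]
  have hmpos : ∀ j : Fin n, (mult (a j) : ℝ≥0∞) ≠ 0 := by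
    intro j
    simp only [hmult, Nat.cast_ne_zero]
    exact Finset.card_ne_zero_of_mem (a := j) (by simp)
  have hmtop : ∀ s : X, (mult s : ℝ≥0∞) ≠ ⊤ := fun s => ENNReal.natCast_ne_top _
  refine ⟨fun j => ((n : ℝ≥0∞) * (mult (a j) : ℝ≥0∞)⁻¹) • ν (a j), ?_, ?_, ?_⟩
  · intro j
    constructor
    rw [Measure.smul_apply, hνval _ _ MeasurableSet.univ, hπs, smul_eq_mul]
    rw [show (n:ℝ≥0∞) * ((mult (a j) : ℝ≥0∞))⁻¹ * ((mult (a j) : ℝ≥0∞) * ((n:ℝ≥0∞))⁻¹)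
        = ((mult (a j) : ℝ≥0∞)⁻¹ * (mult (a j) : ℝ≥0∞)) * ((n:ℝ≥0∞) * ((n:ℝ≥0∞))⁻¹) by ring,
      ENNReal.inv_mul_cancel (hmpos j) (hmtop _),
      ENNReal.mul_inv_cancel hn' hnt, one_mul]
  · -- sum identity
    have himg : MeasurableSet (↑(Finset.image a Finset.univ) : Set X) :=
      (Finset.image a Finset.univ).measurableSet
    ext E hE
    rw [Measure.finset_sum_apply]
    have hterm : ∀ j : Fin n,
        ((n : ℝ≥0∞)⁻¹ • (((n : ℝ≥0∞) * (mult (a j) : ℝ≥0∞)⁻¹) • ν (a j))) E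
        = (mult (a j) : ℝ≥0∞)⁻¹ * π ({a j} ×ˢ E) := by
      intro j
      rw [Measure.smul_apply, Measure.smul_apply, hνval _ _ hE, smul_eq_mul, smul_eq_mul]
      rw [show (n:ℝ≥0∞)⁻¹ * ((n:ℝ≥0∞) * (mult (a j):ℝ≥0∞)⁻¹ * π ({a j} ×ˢ E))
          = ((n:ℝ≥0∞)⁻¹ * (n:ℝ≥0∞)) * ((mult (a j):ℝ≥0∞)⁻¹ * π ({a j} ×ˢ E)) by ring,
        ENNReal.inv_mul_cancel hn' hnt, one_mul]
    rw [Finset.sum_congr rfl (fun j _ => hterm j)]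
    rw [Finset.sum_comp (fun s : X => (mult s : ℝ≥0∞)⁻¹ * π ({s} ×ˢ E)) a]
    have hterm2 : ∀ s ∈ Finset.image a Finset.univ,
        (Finset.filter (fun k => a k = s) Finset.univ).card
          • ((mult s : ℝ≥0∞)⁻¹ * π ({s} ×ˢ E)) = π ({s} ×ˢ E) := by
      intro s hs
      rcases Finset.mem_image.1 hs with ⟨j, -, rfl⟩
      rw [nsmul_eq_mul]
      rw [show ((Finset.filter (fun k => a k = a j) Finset.univ).card : ℝ≥0∞)
          = (mult (a j) : ℝ≥0∞) from rfl]
      rw [← mul_assoc, ENNReal.mul_inv_cancel (hmpos j) (hmtop _), one_mul]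
    rw [Finset.sum_congr rfl hterm2]
    rw [← measure_biUnion_finset ?_ (fun s _ => (measurableSet_singleton s).prod hE)]
    swap
    · intro s hs s' hs' hss
      apply Set.disjoint_left.2
      rintro p ⟨hp1, -⟩ ⟨hp1', -⟩
      exact hss (hp1 ▸ hp1' ▸ rfl)
    have hU : (⋃ s ∈ Finset.image a Finset.univ, ({s} ×ˢ E))
        = (↑(Finset.image a Finset.univ) : Set X) ×ˢ E := by
      ext p
      simp only [Set.mem_iUnion, Set.mem_prod, Set.mem_singleton_iff, Finset.mem_coe]
      constructor
      · rintro ⟨s, hs, rfl, hp2⟩; exact ⟨hs, hp2⟩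
      · rintro ⟨hs, hp2⟩; exact ⟨p.1, hs, rfl, hp2⟩
    rw [hU, Measure.snd_apply hE]
    have h0 : π ((↑(Finset.image a Finset.univ) : Set X)ᶜ ×ˢ (univ : Set X)) = 0 := by
      have he : ((↑(Finset.image a Finset.univ) : Set X)ᶜ ×ˢ (univ : Set X))
          = Prod.fst ⁻¹' (↑(Finset.image a Finset.univ) : Set X)ᶜ := by
        ext p
        simp only [Set.mem_prod, Set.mem_preimage, Set.mem_univ, and_true]
      rw [he, ← Measure.fst_apply himg.compl, hfst]
      simp only [empMeasure, Measure.smul_apply, Measure.finset_sum_apply, smul_eq_mul]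
      have : ∀ j : Fin n, Measure.dirac (a j) (↑(Finset.image a Finset.univ) : Set X)ᶜ = 0 := by
        intro j
        rw [Measure.dirac_apply' _ himg.compl]
        have hmem : a j ∈ (↑(Finset.image a Finset.univ) : Set X) := by
          simp only [Finset.coe_image, Set.mem_image, Finset.mem_coe]
          exact ⟨j, by simp, rfl⟩
        simp [Set.indicator_apply, hmem]
      rw [Finset.sum_congr rfl (fun j _ => this j)]
      simp
    apply le_antisymm
    · exact measure_mono (Set.prod_mono (Set.subset_univ _) le_rfl) |>.trans
        (le_of_eq (by rw [show ((univ : Set X) ×ˢ E) = Prod.snd ⁻¹' E by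
          ext p; simp]))
    · have hsub : Prod.snd ⁻¹' E ⊆
          ((↑(Finset.image a Finset.univ) : Set X) ×ˢ E)
            ∪ ((↑(Finset.image a Finset.univ) : Set X)ᶜ ×ˢ (univ : Set X)) := by
        intro p hp
        by_cases hp1 : p.1 ∈ (↑(Finset.image a Finset.univ) : Set X)
        · exact Or.inl ⟨hp1, hp⟩
        · exact Or.inr ⟨hp1, trivial⟩
      calc π (Prod.snd ⁻¹' E) ≤ π _ + π _ := le_trans (measure_mono hsub) (measure_union_le _ _)
        _ = π ((↑(Finset.image a Finset.univ) : Set X) ×ˢ E) := by rw [h0, add_zero]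
  · -- cost inequality
    have himg : MeasurableSet (↑(Finset.image a Finset.univ) : Set X) :=
      (Finset.image a Finset.univ).measurableSet
    have hFmeas : Measurable (fun p : X × X => edist p.1 p.2 ^ (2:ℝ)) :=
      (ENNReal.continuous_rpow_const.comp continuous_edist).measurable
    have hfs : ∀ s : X, Measurable (fun y : X => edist s y ^ (2:ℝ)) :=
      fun s => (ENNReal.continuous_rpow_const.comp (continuous_const.edist continuous_id)).measurable
    have hterm : ∀ j : Fin n,
        (n : ℝ≥0∞)⁻¹ * ∫⁻ y, edist (a j) y ^ (2:ℝ) ∂(((n : ℝ≥0∞) * (mult (a j) : ℝ≥0∞)⁻¹) • ν (a j))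
        = (mult (a j) : ℝ≥0∞)⁻¹ * ∫⁻ y, edist (a j) y ^ (2:ℝ) ∂(ν (a j)) := by
      intro j
      rw [lintegral_smul_measure, smul_eq_mul]
      rw [show (n:ℝ≥0∞)⁻¹ * ((n:ℝ≥0∞) * (mult (a j):ℝ≥0∞)⁻¹ * ∫⁻ y, edist (a j) y ^ (2:ℝ) ∂(ν (a j)))
          = ((n:ℝ≥0∞)⁻¹ * (n:ℝ≥0∞)) * ((mult (a j):ℝ≥0∞)⁻¹ * ∫⁻ y, edist (a j) y ^ (2:ℝ) ∂(ν (a j))) by ring,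
        ENNReal.inv_mul_cancel hn' hnt, one_mul]
    rw [Finset.sum_congr rfl (fun j _ => hterm j)]
    have hI : ∀ s : X, ∫⁻ y, edist s y ^ (2:ℝ) ∂(ν s)
        = ∫⁻ p in ({s} ×ˢ (univ : Set X)), edist p.1 p.2 ^ (2:ℝ) ∂π := by
      intro s
      show ∫⁻ y, edist s y ^ (2:ℝ) ∂((π.restrict ({s} ×ˢ (univ : Set X))).map Prod.snd) = _
      rw [lintegral_map (hfs s) measurable_snd]
      exact (setLIntegral_congr_fun ((measurableSet_singleton s).prod MeasurableSet.univ)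
        (fun p hp => by
          rcases hp with ⟨hp1, -⟩
          rw [Set.mem_singleton_iff] at hp1
          rw [hp1])).symm
    rw [Finset.sum_congr rfl (fun j _ => by rw [hI (a j)])]
    rw [Finset.sum_comp
      (fun s : X => (mult s : ℝ≥0∞)⁻¹ * ∫⁻ p in ({s} ×ˢ (univ : Set X)), edist p.1 p.2 ^ (2:ℝ) ∂π) a]
    have hterm2 : ∀ s ∈ Finset.image a Finset.univ,
        (Finset.filter (fun k => a k = s) Finset.univ).card
          • ((mult s : ℝ≥0∞)⁻¹ * ∫⁻ p in ({s} ×ˢ (univ : Set X)), edist p.1 p.2 ^ (2:ℝ) ∂π)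
        = ∫⁻ p in ({s} ×ˢ (univ : Set X)), edist p.1 p.2 ^ (2:ℝ) ∂π := by
      intro s hs
      rcases Finset.mem_image.1 hs with ⟨j, -, rfl⟩
      rw [nsmul_eq_mul]
      rw [show ((Finset.filter (fun k => a k = a j) Finset.univ).card : ℝ≥0∞)
          = (mult (a j) : ℝ≥0∞) from rfl]
      rw [← mul_assoc, ENNReal.mul_inv_cancel (hmpos j) (hmtop _), one_mul]
    rw [Finset.sum_congr rfl hterm2]
    rw [← lintegral_biUnion_finset ?_
      (fun s _ => (measurableSet_singleton s).prod MeasurableSet.univ) _]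
    · exact setLIntegral_le_lintegral _ _
    · intro s hs s' hs' hss
      apply Set.disjoint_left.2
      rintro p ⟨hp1, -⟩ ⟨hp1', -⟩
      exact hss (hp1 ▸ hp1' ▸ rfl)

lemma my_eps_opt {α : Type*} [MeasurableSpace α] (c : α → α → ℝ≥0∞) (ν₁ ν₂ : Measure α)
    (hT : transportCost c ν₁ ν₂ ≠ ⊤) {ε : ℝ≥0∞} (hε : ε ≠ 0) (hε' : ε ≠ ⊤) :
    ∃ π : Measure (α × α), π.fst = ν₁ ∧ π.snd = ν₂ ∧
      ∫⁻ p, c p.1 p.2 ∂π ≤ transportCost c ν₁ ν₂ + ε := by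
  have h : transportCost c ν₁ ν₂ < transportCost c ν₁ ν₂ + ε :=
    ENNReal.lt_add_right hT hε
  obtain ⟨π, hπ⟩ := iInf_lt_iff.1 (show (⨅ (π : Measure (α × α))
      (_ : π.fst = ν₁ ∧ π.snd = ν₂), ∫⁻ p, c p.1 p.2 ∂π)
      < transportCost c ν₁ ν₂ + ε from h)
  by_cases hP : π.fst = ν₁ ∧ π.snd = ν₂
  · refine ⟨π, hP.1, hP.2, ?_⟩
    rw [iInf_pos hP] at hπ
    exact hπ.le
  · rw [iInf_neg hP] at hπ
    exact absurd hπ (by simp [lt_irrefl, (ENNReal.add_ne_top.2 ⟨hT, hε'⟩)])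

lemma my_recouple {X : Type*} [MetricSpace X] [SecondCountableTopology X] [MeasurableSpace X]
    [BorelSpace X] {n : ℕ} (b : Fin n → X) (μ : Measure X)
    (ms : Fin n → Measure X) (hprob : ∀ j, IsProbabilityMeasure (ms j))
    (hsum : (∑ j, (n : ℝ≥0∞)⁻¹ • ms j) = μ) :
    transportCost (fun x y => edist x y ^ (2:ℝ)) (empMeasure b) μ
      ≤ ∑ j, (n : ℝ≥0∞)⁻¹ * ∫⁻ y, edist (b j) y ^ (2:ℝ) ∂(ms j) := by
  classical
  set π : Measure (X × X) := ∑ j, (n : ℝ≥0∞)⁻¹ • ((Measure.dirac (b j)).prod (ms j)) with hπdef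
  have hfst : π.fst = empMeasure b := by
    ext E hE
    rw [Measure.fst_apply hE, hπdef, Measure.finset_sum_apply]
    rw [empMeasure, Measure.smul_apply, Measure.finset_sum_apply, smul_eq_mul, Finset.mul_sum]
    refine Finset.sum_congr rfl (fun j _ => ?_)
    rw [Measure.smul_apply, smul_eq_mul]
    congr 1
    rw [← Measure.fst_apply hE, Measure.fst_prod]
  have hsnd : π.snd = μ := by
    rw [← hsum]
    ext E hE
    rw [Measure.snd_apply hE, hπdef, Measure.finset_sum_apply, Measure.finset_sum_apply]
    refine Finset.sum_congr rfl (fun j _ => ?_)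
    rw [Measure.smul_apply, Measure.smul_apply, smul_eq_mul, smul_eq_mul]
    congr 1
    rw [← Measure.snd_apply hE, Measure.snd_prod]
  have hcost : ∫⁻ p, edist p.1 p.2 ^ (2:ℝ) ∂π
      = ∑ j, (n : ℝ≥0∞)⁻¹ * ∫⁻ y, edist (b j) y ^ (2:ℝ) ∂(ms j) := by
    rw [hπdef, lintegral_finset_sum_measure]
    refine Finset.sum_congr rfl (fun j _ => ?_)
    rw [lintegral_smul_measure]
    congr 1
    have hF : Measurable (fun p : X × X => edist p.1 p.2 ^ (2:ℝ)) :=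
      (ENNReal.continuous_rpow_const.comp continuous_edist).measurable
    rw [Measure.dirac_prod, lintegral_map hF measurable_prodMk_left]
  calc transportCost (fun x y => edist x y ^ (2:ℝ)) (empMeasure b) μ
      ≤ ⨅ (_ : π.fst = empMeasure b ∧ π.snd = μ), ∫⁻ p, edist p.1 p.2 ^ (2:ℝ) ∂π :=
        iInf_le _ π
    _ = ∫⁻ p, edist p.1 p.2 ^ (2:ℝ) ∂π := iInf_pos ⟨hfst, hsnd⟩
    _ = _ := hcost

lemma my_rpow_two (u : ℝ≥0∞) : u ^ (2:ℝ) = u ^ (2:ℕ) := by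
  rw [← ENNReal.rpow_natCast]; norm_num

lemma my_expand {X : Type*} [MetricSpace X] [MeasurableSpace X] [OpensMeasurableSpace X]
    (ρ : Measure X) [IsProbabilityMeasure ρ] (x z : X) :
    ∫⁻ y, edist z y ^ (2:ℝ) ∂ρ ≤ ∫⁻ y, edist x y ^ (2:ℝ) ∂ρ
      + (2 * edist z x * ∫⁻ y, edist x y ∂ρ + edist z x ^ (2:ℝ)) := by
  have hme : Measurable (fun y : X => edist x y) :=
    (continuous_const.edist continuous_id).measurable
  have hme2 : Measurable (fun y : X => edist x y ^ (2:ℝ)) :=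
    (ENNReal.continuous_rpow_const.comp (continuous_const.edist continuous_id)).measurable
  calc ∫⁻ y, edist z y ^ (2:ℝ) ∂ρ
      ≤ ∫⁻ y, (edist x y ^ (2:ℝ) + (2 * edist z x * edist x y + edist z x ^ (2:ℝ))) ∂ρ := by
        apply lintegral_mono
        intro y
        show edist z y ^ (2:ℝ) ≤ edist x y ^ (2:ℝ) + (2 * edist z x * edist x y + edist z x ^ (2:ℝ))
        rw [my_rpow_two, my_rpow_two, my_rpow_two]
        calc edist z y ^ (2:ℕ) ≤ (edist x y + edist z x) ^ (2:ℕ) := by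
              apply pow_le_pow_left' ?_ 2
              rw [add_comm]
              exact (edist_triangle z x y).trans_eq (by rw [edist_comm z x])
          _ = edist x y ^ (2:ℕ) + (2 * edist z x * edist x y + edist z x ^ (2:ℕ)) := by ring
    _ = ∫⁻ y, edist x y ^ (2:ℝ) ∂ρ + (2 * edist z x * ∫⁻ y, edist x y ∂ρ + edist z x ^ (2:ℝ)) := by
        rw [lintegral_add_left hme2, lintegral_add_left ((hme.const_mul _))]
        rw [lintegral_const_mul _ hme, lintegral_const]
        rw [measure_univ, mul_one]

lemma my_cs {X : Type*} [MetricSpace X] [MeasurableSpace X] [OpensMeasurableSpace X]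
    (ρ : Measure X) [IsProbabilityMeasure ρ] (x : X) :
    (∫⁻ y, edist x y ∂ρ) ≤ (∫⁻ y, edist x y ^ (2:ℝ) ∂ρ) ^ (1/2 : ℝ) := by
  have hme : Measurable (fun y : X => edist x y) :=
    (continuous_const.edist continuous_id).measurable
  have hconj : (2:ℝ).HolderConjugate 2 := by constructor <;> norm_num
  have := ENNReal.lintegral_mul_le_Lp_mul_Lq ρ hconj hme.aemeasurable
    (aemeasurable_const (b := (1:ℝ≥0∞)))
  simpa [measure_univ] using this

set_option maxHeartbeats 1600000 in
/-- The sum of the squared coordinatewise subgradient norms of `Fₙ = W₂(Lₙ^·,μ)` is at most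
`1/n` wherever `Fₙ > 0`. -/
theorem subgradient_sum_le
    {X : Type*} [MetricSpace X] [PolishSpace X] [MeasurableSpace X] [BorelSpace X]
    (μ : Measure X) [IsProbabilityMeasure μ]
    (hmom : ∃ x₀ : X, ∫⁻ x, edist x₀ x ^ (2 : ℝ) ∂μ < ∞)
    (n : ℕ) (hn : 1 ≤ n) (a : Fin n → X)
    (hpos : 0 < Wp 2 (empMeasure a) μ) :
    ∑ i, (subGradLen (fun z => Wp 2 (empMeasure (Function.update a i z)) μ) (a i)) ^ 2 ≤
      1 / (n : ℝ) := by

  classical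
  have hn0 : n ≠ 0 := Nat.one_le_iff_ne_zero.1 hn
  have hn' : (n : ℝ≥0∞) ≠ 0 := Nat.cast_ne_zero.2 hn0
  have hnt : (n : ℝ≥0∞) ≠ ⊤ := ENNReal.natCast_ne_top n
  have hn1 : (1:ℝ) ≤ (n:ℝ) := by exact_mod_cast hn
  have hnR : (0:ℝ) < (n:ℝ) := by linarith
  set c : X → X → ℝ≥0∞ := fun x y => edist x y ^ (2:ℝ) with hc
  set T : ℝ≥0∞ := transportCost c (empMeasure a) μ with hTdef
  have hW : Wp 2 (empMeasure a) μ = (T ^ ((1:ℝ)/2)).toReal := rfl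
  rw [hW] at hpos
  have hT0 : T ≠ 0 := by
    intro h
    rw [h] at hpos
    simp [ENNReal.zero_rpow_of_pos] at hpos
  have hTtop : T ≠ ⊤ := by
    intro h
    rw [h] at hpos
    rw [ENNReal.top_rpow_of_pos (by norm_num)] at hpos
    simp at hpos
  set t : ℝ := T.toReal with htdef
  have ht : 0 < t := ENNReal.toReal_pos hT0 hTtop
  set s : ℝ := Real.sqrt t with hsdef
  have hs : 0 < s := Real.sqrt_pos.2 ht
  have hWst : Wp 2 (empMeasure a) μ = s := by
    rw [hW, ← ENNReal.toReal_rpow, hsdef, Real.sqrt_eq_rpow, htdef]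
  -- ε-optimal decompositions
  have hcpl : ∀ k : ℕ, ∃ ms : Fin n → Measure X,
      (∀ j, IsProbabilityMeasure (ms j)) ∧
      (∑ j, (n : ℝ≥0∞)⁻¹ • ms j) = μ ∧
      ∑ j, (n : ℝ≥0∞)⁻¹ * ∫⁻ y, edist (a j) y ^ (2:ℝ) ∂(ms j) ≤ T + ((k:ℝ≥0∞)+1)⁻¹ := by
    intro k
    obtain ⟨π, h1, h2, h3⟩ := my_eps_opt c (empMeasure a) μ hTtop
      (ε := ((k:ℝ≥0∞)+1)⁻¹) (by simp) (by simp)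
    obtain ⟨ms, hp, hsum, hcost⟩ := my_decomp hn0 a π h1
    exact ⟨ms, hp, by rw [hsum, h2], hcost.trans h3⟩
  choose ms hprob hsum hcost using hcpl
  set K : ℕ → Fin n → ℝ≥0∞ := fun k j => ∫⁻ y, edist (a j) y ^ (2:ℝ) ∂(ms k j) with hKdef
  set A : ℕ → Fin n → ℝ := fun k j => (∫⁻ y, edist (a j) y ∂(ms k j)).toReal with hAdef
  have hepsfin : ∀ k : ℕ, ((k:ℝ≥0∞)+1)⁻¹ ≠ ⊤ := fun k => by simp
  have hTe : ∀ k : ℕ, T + ((k:ℝ≥0∞)+1)⁻¹ ≠ ⊤ := fun k =>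
    ENNReal.add_ne_top.2 ⟨hTtop, hepsfin k⟩
  have hsumK : ∀ k, ∑ j, K k j ≤ (n:ℝ≥0∞) * (T + ((k:ℝ≥0∞)+1)⁻¹) := by
    intro k
    have h1 : (n:ℝ≥0∞)⁻¹ * ∑ j, K k j ≤ T + ((k:ℝ≥0∞)+1)⁻¹ := by
      rw [Finset.mul_sum]
      exact hcost k
    calc ∑ j, K k j = (n:ℝ≥0∞) * ((n:ℝ≥0∞)⁻¹ * ∑ j, K k j) := by
          rw [← mul_assoc, ENNReal.mul_inv_cancel hn' hnt, one_mul]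
      _ ≤ (n:ℝ≥0∞) * (T + ((k:ℝ≥0∞)+1)⁻¹) := mul_le_mul_right h1 _
  have hKfin : ∀ k j, K k j ≠ ⊤ := by
    intro k j
    refine ne_top_of_le_ne_top (ENNReal.mul_ne_top hnt (hTe k)) ?_
    exact le_trans (Finset.single_le_sum (f := fun j => K k j)
      (fun _ _ => zero_le) (Finset.mem_univ j)) (hsumK k)
  have hAenn : ∀ k j, (∫⁻ y, edist (a j) y ∂(ms k j)) ≤ (K k j) ^ ((1:ℝ)/2) := by
    intro k j
    haveI := hprob k j
    exact my_cs (ms k j) (a j)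
  have hAenn_fin : ∀ k j, (∫⁻ y, edist (a j) y ∂(ms k j)) ≠ ⊤ := by
    intro k j
    refine ne_top_of_le_ne_top ?_ (hAenn k j)
    exact ENNReal.rpow_ne_top_of_nonneg (by norm_num) (hKfin k j)
  have hA0 : ∀ k j, 0 ≤ A k j := fun k j => ENNReal.toReal_nonneg
  have hAsqrt : ∀ k j, A k j ≤ Real.sqrt ((K k j).toReal) := by
    intro k j
    have h1 : A k j ≤ ((K k j) ^ ((1:ℝ)/2)).toReal :=
      ENNReal.toReal_mono (ENNReal.rpow_ne_top_of_nonneg (by norm_num) (hKfin k j)) (hAenn k j)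
    rwa [← ENNReal.toReal_rpow, ← Real.sqrt_eq_rpow] at h1
  have hKtR : ∀ k j, (K k j).toReal ≤ (n:ℝ) * (t + 1) := by
    intro k j
    have h1 : K k j ≤ (n:ℝ≥0∞) * (T + 1) := by
      refine le_trans (le_trans (Finset.single_le_sum (f := fun j => K k j)
        (fun _ _ => zero_le) (Finset.mem_univ j)) (hsumK k)) ?_
      exact mul_le_mul_right (add_le_add_right (by simp [ENNReal.inv_le_one]) T) _
    have h2 := ENNReal.toReal_mono (ENNReal.mul_ne_top hnt
      (ENNReal.add_ne_top.2 ⟨hTtop, by simp⟩)) h1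
    rwa [ENNReal.toReal_mul, ENNReal.toReal_add hTtop (by simp), ENNReal.toReal_natCast,
      ENNReal.toReal_one] at h2
  set R : ℝ := Real.sqrt ((n:ℝ) * (t + 1)) with hRdef
  have hAR : ∀ k j, A k j ≤ R := fun k j =>
    (hAsqrt k j).trans (Real.sqrt_le_sqrt (hKtR k j))
  have hball : ∀ k, A k ∈ Metric.closedBall (0 : Fin n → ℝ) R := by
    intro k
    rw [Metric.mem_closedBall, dist_pi_le_iff (Real.sqrt_nonneg _)]
    intro j
    rw [Real.dist_eq, Pi.zero_apply, sub_zero, abs_le]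
    exact ⟨by linarith [hA0 k j, Real.sqrt_nonneg ((n:ℝ) * (t+1))], hAR k j⟩
  obtain ⟨Astar, -, φ, hφ, hconv⟩ :=
    (isCompact_closedBall (0 : Fin n → ℝ) R).tendsto_subseq hball
  have hconv_i : ∀ i, Tendsto (fun m => A (φ m) i) atTop (𝓝 (Astar i)) := by
    intro i
    exact (tendsto_pi_nhds.1 hconv) i
  have hAstar0 : ∀ i, 0 ≤ Astar i := fun i =>
    ge_of_tendsto (hconv_i i) (Filter.Eventually.of_forall fun m => hA0 _ _)
  -- sum of squares bound
  have hsumsq : ∑ i, (Astar i)^2 ≤ (n:ℝ) * t := by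
    have hm : ∀ m, ∑ i, (A (φ m) i)^2 ≤ (n:ℝ) * (t + ((φ m : ℝ)+1)⁻¹) := by
      intro m
      have h1 : ∀ i : Fin n, (A (φ m) i)^2 ≤ (K (φ m) i).toReal := by
        intro i
        have := hAsqrt (φ m) i
        nlinarith [hA0 (φ m) i, Real.sq_sqrt (ENNReal.toReal_nonneg (a := K (φ m) i)),
          Real.sqrt_nonneg ((K (φ m) i).toReal)]
      refine le_trans (Finset.sum_le_sum (fun i _ => h1 i)) ?_
      have h2 : ∑ i, (K (φ m) i).toReal = (∑ i, K (φ m) i).toReal := by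
        rw [ENNReal.toReal_sum (fun i _ => hKfin (φ m) i)]
      rw [h2]
      have h3 := ENNReal.toReal_mono (ENNReal.mul_ne_top hnt (hTe (φ m))) (hsumK (φ m))
      rwa [ENNReal.toReal_mul, ENNReal.toReal_add hTtop (hepsfin (φ m)),
        ENNReal.toReal_natCast, ENNReal.toReal_inv, ENNReal.toReal_add (by simp) (by simp),
        ENNReal.toReal_natCast, ENNReal.toReal_one] at h3
    have hlhs : Tendsto (fun m => ∑ i, (A (φ m) i)^2) atTop (𝓝 (∑ i, (Astar i)^2)) := by
      apply tendsto_finset_sum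
      intro i _
      exact (hconv_i i).pow 2
    have hrhs : Tendsto (fun m => (n:ℝ) * (t + ((φ m : ℝ)+1)⁻¹)) atTop (𝓝 ((n:ℝ) * (t + 0))) := by
      apply Tendsto.const_mul
      apply Tendsto.const_add
      apply Tendsto.comp tendsto_inv_atTop_zero
      apply tendsto_atTop_add_const_right
      exact tendsto_natCast_atTop_atTop.comp hφ.tendsto_atTop
    rw [add_zero] at hrhs
    exact le_of_tendsto_of_tendsto' hlhs hrhs hm
  -- per-coordinate limsup bound
  have hkey : ∀ i, (subGradLen (fun z => Wp 2 (empMeasure (Function.update a i z)) μ) (a i))^2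
      ≤ (Astar i / ((n:ℝ) * s))^2 := by
    intro i
    have hc0 : 0 ≤ Astar i / ((n:ℝ) * s) := div_nonneg (hAstar0 i) (by positivity)
    rw [subGradLen]
    apply my_limsup_sq_le (fun z => div_nonneg (le_max_right _ _) dist_nonneg) hc0
    intro δ hδ
    -- choose M
    obtain ⟨M, hM⟩ := (Metric.tendsto_atTop.1 (hconv_i i)) (δ * ((n:ℝ) * s) / 2) (by positivity)
    set d₀ : ℝ := δ * s / 2 with hd₀def
    have hd₀ : 0 < d₀ := by positivity
    have hev1 : ∀ᶠ z in 𝓝[≠] (a i), dist (a i) z < d₀ := by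
      apply eventually_nhdsWithin_of_eventually_nhds
      have h1 := Metric.ball_mem_nhds (a i) hd₀
      filter_upwards [h1] with z hz
      rw [Metric.mem_ball] at hz
      rw [dist_comm]
      exact hz
    have hev2 : ∀ᶠ z in 𝓝[≠] (a i), z ≠ a i := by
      filter_upwards [self_mem_nhdsWithin] with z hz
      exact hz
    filter_upwards [hev1, hev2] with z hdlt hzne
    set d : ℝ := dist (a i) z with hddef
    have hd : 0 < d := by
      rw [hddef, dist_comm]
      exact dist_pos.2 hzne
    -- choose coupling index
    set m : ℕ := max M (Nat.ceil (1/d^2)) with hmdef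
    set k : ℕ := φ m with hkdef
    have hεd : ((φ m : ℝ)+1)⁻¹ ≤ d^2 := by
      have h1 : (1:ℝ)/d^2 ≤ (φ m : ℝ) + 1 := by
        calc (1:ℝ)/d^2 ≤ (Nat.ceil (1/d^2) : ℝ) := Nat.le_ceil _
          _ ≤ (m : ℝ) := by exact_mod_cast Nat.cast_le.2 (le_max_right _ _)
          _ ≤ (φ m : ℝ) := by exact_mod_cast Nat.cast_le.2 hφ.le_apply
          _ ≤ (φ m : ℝ) + 1 := by linarith
      rw [inv_le_comm₀ (by positivity : (0:ℝ) < (φ m : ℝ)+1) (by positivity : (0:ℝ) < d^2)]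
      rw [← one_div]
      exact h1
    have hAk : A k i ≤ Astar i + δ * ((n:ℝ) * s) / 2 := by
      have h1 := hM m (le_max_left _ _)
      rw [Real.dist_eq, abs_lt] at h1
      linarith [h1.2]
    -- ENNReal transport bound
    set Aenn : ℝ≥0∞ := ∫⁻ y, edist (a i) y ∂(ms k i) with hAenndef
    set dE : ℝ≥0∞ := edist z (a i) with hdEdef
    have hdE_ne : dE ≠ ⊤ := edist_ne_top z (a i)
    have hdEtoReal : dE.toReal = d := by
      rw [hdEdef, ← dist_edist, dist_comm]
    have hTz : transportCost c (empMeasure (Function.update a i z)) μ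
        ≤ (T + ((k:ℝ≥0∞)+1)⁻¹) + (n:ℝ≥0∞)⁻¹ * (2 * dE * Aenn + dE ^ (2:ℝ)) := by
      refine le_trans (my_recouple (Function.update a i z) μ (ms k) (hprob k) (hsum k)) ?_
      have hsplit : ∑ j, (n:ℝ≥0∞)⁻¹ * ∫⁻ y, edist (Function.update a i z j) y ^ (2:ℝ) ∂(ms k j)
          = (n:ℝ≥0∞)⁻¹ * ∫⁻ y, edist z y ^ (2:ℝ) ∂(ms k i)
            + ∑ j ∈ Finset.univ.erase i, (n:ℝ≥0∞)⁻¹ * K k j := by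
        rw [← Finset.add_sum_erase _ _ (Finset.mem_univ i)]
        congr 1
        · rw [Function.update_self]
        · refine Finset.sum_congr rfl (fun j hj => ?_)
          rw [Function.update_of_ne (Finset.ne_of_mem_erase hj)]
      rw [hsplit]
      haveI := hprob k i
      have hexp := my_expand (ms k i) (a i) z
      calc (n:ℝ≥0∞)⁻¹ * ∫⁻ y, edist z y ^ (2:ℝ) ∂(ms k i)
            + ∑ j ∈ Finset.univ.erase i, (n:ℝ≥0∞)⁻¹ * K k j
          ≤ (n:ℝ≥0∞)⁻¹ * (K k i + (2 * dE * Aenn + dE ^ (2:ℝ)))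
            + ∑ j ∈ Finset.univ.erase i, (n:ℝ≥0∞)⁻¹ * K k j := by
            exact add_le_add_left (mul_le_mul_right hexp _) _
        _ = ((n:ℝ≥0∞)⁻¹ * K k i + ∑ j ∈ Finset.univ.erase i, (n:ℝ≥0∞)⁻¹ * K k j)
            + (n:ℝ≥0∞)⁻¹ * (2 * dE * Aenn + dE ^ (2:ℝ)) := by ring
        _ = (∑ j, (n:ℝ≥0∞)⁻¹ * K k j) + (n:ℝ≥0∞)⁻¹ * (2 * dE * Aenn + dE ^ (2:ℝ)) := by
            rw [Finset.add_sum_erase _ (fun j => (n:ℝ≥0∞)⁻¹ * K k j) (Finset.mem_univ i)]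
        _ ≤ (T + ((k:ℝ≥0∞)+1)⁻¹) + (n:ℝ≥0∞)⁻¹ * (2 * dE * Aenn + dE ^ (2:ℝ)) :=
            add_le_add_left (hcost k) _
    -- real bound
    set εr : ℝ := ((φ m : ℝ)+1)⁻¹ with hεrdef
    have hεr0 : 0 ≤ εr := by positivity
    set u₀ : ℝ := εr + (2 * d * A k i + d^2) / (n:ℝ) with hu₀def
    have hu₀0 : 0 ≤ u₀ := by
      have := hA0 k i
      positivity
    have hBfin : (T + ((k:ℝ≥0∞)+1)⁻¹) + (n:ℝ≥0∞)⁻¹ * (2 * dE * Aenn + dE ^ (2:ℝ)) ≠ ⊤ := by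
      refine ENNReal.add_ne_top.2 ⟨hTe k, ?_⟩
      refine ENNReal.mul_ne_top (by simp [hn']) ?_
      refine ENNReal.add_ne_top.2 ⟨?_, ?_⟩
      · exact ENNReal.mul_ne_top (ENNReal.mul_ne_top (by simp) hdE_ne) (hAenn_fin k i)
      · exact ENNReal.rpow_ne_top_of_nonneg (by norm_num) hdE_ne
    have htoReal : ((T + ((k:ℝ≥0∞)+1)⁻¹) + (n:ℝ≥0∞)⁻¹ * (2 * dE * Aenn + dE ^ (2:ℝ))).toReal
        ≤ t + u₀ := by
      refine le_trans (ENNReal.toReal_add_le) ?_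
      have h1 : (T + ((k:ℝ≥0∞)+1)⁻¹).toReal = t + εr := by
        rw [ENNReal.toReal_add hTtop (hepsfin k), ENNReal.toReal_inv]
        have he : (((k:ℝ≥0∞))+1).toReal = (k:ℝ)+1 := by
          rw [ENNReal.toReal_add (by simp) (by simp), ENNReal.toReal_natCast, ENNReal.toReal_one]
        rw [he]
      have h2 : ((n:ℝ≥0∞)⁻¹ * (2 * dE * Aenn + dE ^ (2:ℝ))).toReal
          ≤ (n:ℝ)⁻¹ * (2 * d * A k i + d^2) := by
        rw [ENNReal.toReal_mul, ENNReal.toReal_inv, ENNReal.toReal_natCast]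
        refine mul_le_mul_of_nonneg_left ?_ (by positivity)
        refine le_trans (ENNReal.toReal_add_le) ?_
        have h3 : (2 * dE * Aenn).toReal = 2 * d * A k i := by
          rw [ENNReal.toReal_mul, ENNReal.toReal_mul, ENNReal.toReal_ofNat, hdEtoReal, hAdef]
        have h4 : (dE ^ (2:ℝ)).toReal = d^2 := by
          rw [← ENNReal.toReal_rpow, hdEtoReal, my_real_rpow_two]
        rw [h3, h4]
      rw [h1]
      have : (n:ℝ)⁻¹ * (2 * d * A k i + d^2) = (2 * d * A k i + d^2) / (n:ℝ) := by
        rw [inv_mul_eq_div]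
      rw [this] at h2
      linarith
    have hWz : Wp 2 (empMeasure (Function.update a i z)) μ
        ≤ Real.sqrt (t + u₀) := by
      have h1 : Wp 2 (empMeasure (Function.update a i z)) μ
          = Real.sqrt ((transportCost c (empMeasure (Function.update a i z)) μ).toReal) := by
        rw [Wp, ← ENNReal.toReal_rpow, Real.sqrt_eq_rpow]
      rw [h1]
      apply Real.sqrt_le_sqrt
      exact le_trans (ENNReal.toReal_mono hBfin hTz) htoReal
    have hfa : Wp 2 (empMeasure (Function.update a i (a i))) μ = s := by
      rw [Function.update_eq_self]
      exact hWst
    rw [hfa]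
    -- final arithmetic
    have hmax : max (Wp 2 (empMeasure (Function.update a i z)) μ - s) 0 ≤ u₀ / (2*s) := by
      refine max_le ?_ (by positivity)
      have h1 := my_sqrt_add_le ht hu₀0
      rw [← hsdef] at h1
      linarith [hWz.trans h1]
    have hstep : max (Wp 2 (empMeasure (Function.update a i z)) μ - s) 0 / dist (a i) z
        ≤ (u₀ / (2*s)) / d := by
      rw [← hddef]
      gcongr
    refine le_trans hstep ?_
    have hchain : (u₀ / (2*s)) / d ≤ Astar i / ((n:ℝ) * s) + δ := by
      rw [div_div, div_le_iff₀ (by positivity)]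
      have hu : u₀ ≤ d^2 + (2*d*(Astar i + δ * ((n:ℝ)*s)/2) + d^2)/(n:ℝ) := by
        rw [hu₀def]
        have hnum : 2*d*A k i + d^2 ≤ 2*d*(Astar i + δ*((n:ℝ)*s)/2) + d^2 := by
          nlinarith [hd.le, hAk]
        have hdiv2 : (2*d*A k i + d^2)/(n:ℝ) ≤ (2*d*(Astar i + δ*((n:ℝ)*s)/2) + d^2)/(n:ℝ) := by
          gcongr
        linarith [hεd, hdiv2]
      refine le_trans hu ?_
      have hexp2 : (2*d*(Astar i + δ*((n:ℝ)*s)/2) + d^2)/(n:ℝ)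
          = 2*d*(Astar i)/(n:ℝ) + δ*d*s + d^2/(n:ℝ) := by field_simp
      have hrhs : (Astar i / ((n:ℝ)*s) + δ) * (2*s*d) = 2*d*(Astar i)/(n:ℝ) + 2*s*d*δ := by
        field_simp
      rw [hexp2, hrhs]
      have h1 : d^2 ≤ δ*s*d/2 := by nlinarith [hdlt, hd.le]
      have h2 : d^2/(n:ℝ) ≤ d^2 := div_le_self (sq_nonneg d) hn1
      nlinarith
    exact hchain
  -- conclude
  have hfinal : ∑ i, (Astar i / ((n:ℝ) * s))^2 ≤ 1 / (n:ℝ) := by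
    have h1 : ∑ i, (Astar i / ((n:ℝ) * s))^2 = (∑ i, (Astar i)^2) / ((n:ℝ)^2 * t) := by
      rw [Finset.sum_div]
      refine Finset.sum_congr rfl (fun i _ => ?_)
      rw [div_pow, mul_pow]
      congr 2
      rw [hsdef, Real.sq_sqrt ht.le]
    rw [h1]
    rw [div_le_div_iff₀ (by positivity) (by positivity)]
    calc (∑ i, (Astar i)^2) * (n:ℝ) ≤ ((n:ℝ) * t) * (n:ℝ) := by
          nlinarith [hsumsq]
      _ = 1 * ((n:ℝ)^2 * t) := by ring
  calc ∑ i, (subGradLen (fun z => Wp 2 (empMeasure (Function.update a i z)) μ) (a i))^2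
      ≤ ∑ i, (Astar i / ((n:ℝ) * s))^2 := Finset.sum_le_sum (fun i _ => hkey i)
    _ ≤ 1 / (n:ℝ) := hfinal
end
end

section
/- Let (X,ρ) be a Polish metric space, μ a probability measure on X, and n ≥ 1. Let A be a set of probability measures on X such that {x ∈ Xⁿ : L_n^x ∈ A} is measurable, where L_n^x = n⁻¹ Σᵢ₌₁ⁿ δ_{xⁱ}. Let ν be a probability measure on X absolutely continuous with respect to μ, with H(ν|μ) < ∞ and ν⊗ⁿ(L_n ∈ A) := ν⊗ⁿ{x : L_n^x ∈ A} > 0. Then (1/n)·log( μ⊗ⁿ(L_n ∈ A) · e^{n·H(ν|μ)} ) ≥ −H(ν|μ)·ν⊗ⁿ(L_n ∈ Aᶜ)/ν⊗ⁿ(L_n ∈ A) + (1/n)·log ν⊗ⁿ(L_n ∈ A) − 1/(n·e·ν⊗ⁿ(L_n ∈ A)). -/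
open MeasureTheory Filter Set
open scoped ENNReal NNReal Topology Pointwise Classical

noncomputable section

section DSAux

open MeasureTheory Filter Set

lemma aux_mul_log_ge {t : ℝ} (ht : 0 ≤ t) : -(Real.exp 1)⁻¹ ≤ t * Real.log t := by
  rcases eq_or_lt_of_le ht with h | h
  · simp only [← h, Real.log_zero, mul_zero, zero_mul]
    exact neg_nonpos.mpr (inv_nonneg.mpr (Real.exp_pos 1).le)
  · have h1 := Real.add_one_le_exp (-1 - Real.log t)
    have h2 : Real.exp (-1 - Real.log t) = (Real.exp 1)⁻¹ * t⁻¹ := by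
      rw [Real.exp_sub, Real.exp_neg, Real.exp_log h]
      ring
    rw [h2] at h1
    have h3 := mul_le_mul_of_nonneg_left h1 ht
    have h5 : t * ((Real.exp 1)⁻¹ * t⁻¹) = (Real.exp 1)⁻¹ := by
      field_simp
    nlinarith [h3, h5]

lemma aux_mul_inv_le_one {t : ℝ} (ht : 0 ≤ t) : t * t⁻¹ ≤ 1 := by
  rcases eq_or_ne t 0 with h | h
  · simp [h]
  · rw [mul_inv_cancel₀ h]

lemma aux_integral_pos {α : Type*} [MeasurableSpace α] (m : Measure α) [IsProbabilityMeasure m]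
    {h : α → ℝ} (hint : Integrable h m) (hpos : ∀ᵐ x ∂m, 0 < h x) :
    0 < ∫ x, h x ∂m := by
  have hnn : 0 ≤ᵐ[m] h := hpos.mono fun x hx => hx.le
  have hcompl : m (Function.support h)ᶜ = 0 :=
    measure_mono_null (fun x hx => by simp [Function.notMem_support.1 hx]) (ae_iff.1 hpos)
  rw [integral_pos_iff_support_of_nonneg_ae hnn hint]
  by_contra h0
  rw [not_lt, le_zero_iff] at h0
  have huniv : m Set.univ ≤ m (Function.support h) + m (Function.support h)ᶜ := by
    rw [← Set.union_compl_self (Function.support h)]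
    exact measure_union_le _ _
  rw [measure_univ, h0, hcompl, add_zero] at huniv
  exact (zero_lt_one.not_ge (by exact_mod_cast huniv))

lemma aux_integral_log_le {α : Type*} [MeasurableSpace α] (m : Measure α) [IsProbabilityMeasure m]
    {h : α → ℝ} (hint : Integrable h m)
    (hlogint : Integrable (fun x => Real.log (h x)) m)
    (hpos : ∀ᵐ x ∂m, 0 < h x) :
    ∫ x, Real.log (h x) ∂m ≤ Real.log (∫ x, h x ∂m) := by
  have ha : 0 < ∫ x, h x ∂m := aux_integral_pos m hint hpos
  set a := ∫ x, h x ∂m with ha'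
  have hle : ∀ᵐ x ∂m, Real.log (h x) ≤ h x / a + (Real.log a - 1) := by
    filter_upwards [hpos] with x hx
    have hd : Real.log (h x / a) ≤ h x / a - 1 :=
      Real.log_le_sub_one_of_pos (by positivity)
    rw [Real.log_div hx.ne' ha.ne'] at hd
    linarith
  have hrhsInt : Integrable (fun x => h x / a + (Real.log a - 1)) m :=
    (hint.div_const a).add (integrable_const _)
  have hmono := integral_mono_ae hlogint hrhsInt hle
  have hrhs : ∫ x, (h x / a + (Real.log a - 1)) ∂m = Real.log a := by
    rw [integral_add (hint.div_const a) (integrable_const _), integral_div, integral_const,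
      probReal_univ, one_smul, div_self ha.ne']
    ring
  rwa [hrhs] at hmono

lemma aux_lintegral_pi_prod {X : Type*} [MeasurableSpace X] (μ : Measure X) [SigmaFinite μ] :
    ∀ (n : ℕ) (f : Fin n → X → ℝ≥0∞), (∀ i, Measurable (f i)) →
      ∫⁻ x : Fin n → X, ∏ i, f i (x i) ∂(Measure.pi fun _ => μ) = ∏ i, ∫⁻ a, f i a ∂μ := by
  intro n
  induction n with
  | zero =>
    intro f _
    simp [lintegral_const]
  | succ n ih =>
    intro f hf
    have hmp := measurePreserving_piFinSuccAbove (fun _ : Fin (n + 1) => μ) 0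
    set e := MeasurableEquiv.piFinSuccAbove (fun _ : Fin (n + 1) => X) 0 with he
    have hFm : Measurable fun y : X × (Fin n → X) => ∏ i, f i (e.symm y i) := by
      apply Finset.measurable_prod
      intro i _
      exact (hf i).comp ((measurable_pi_apply i).comp e.symm.measurable)
    have step1 : ∫⁻ x : Fin (n + 1) → X, ∏ i, f i (x i) ∂(Measure.pi fun _ => μ)
        = ∫⁻ y, ∏ i, f i (e.symm y i) ∂(μ.prod (Measure.pi fun _ : Fin n => μ)) := by
      rw [← hmp.lintegral_comp hFm]
      refine lintegral_congr fun x => ?_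
      simp [MeasurableEquiv.symm_apply_apply]
    rw [step1]
    have step2 : ∀ y : X × (Fin n → X),
        ∏ i, f i (e.symm y i) = f 0 y.1 * ∏ j : Fin n, f j.succ (y.2 j) := by
      intro y
      have : e.symm y = Fin.cons y.1 y.2 := by
        simp [he, MeasurableEquiv.piFinSuccAbove_symm_apply, Fin.insertNthEquiv,
          Fin.insertNth_zero]
      rw [this, Fin.prod_univ_succ]
      simp
    simp_rw [step2]
    have hg : Measurable fun y : Fin n → X => ∏ j : Fin n, f j.succ (y j) :=
      Finset.measurable_prod _ fun j _ => (hf j.succ).comp (measurable_pi_apply j)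
    have hpm := lintegral_prod_mul (μ := μ) (ν := Measure.pi fun _ : Fin n => μ)
      (f := f 0) (g := fun y : Fin n → X => ∏ j : Fin n, f j.succ (y j))
      (hf 0).aemeasurable hg.aemeasurable
    rw [hpm, ih (fun j => f j.succ) (fun j => hf j.succ), Fin.prod_univ_succ]

lemma aux_pi_withDensity {X : Type*} [MeasurableSpace X] (μ ν : Measure X)
    [IsProbabilityMeasure μ] [IsProbabilityMeasure ν]
    {f : X → ℝ≥0∞} (hf : Measurable f) (hν : μ.withDensity f = ν) (n : ℕ) :
    (Measure.pi fun _ : Fin n => ν)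
      = (Measure.pi fun _ : Fin n => μ).withDensity fun x => ∏ i, f (x i) := by
  apply Measure.pi_eq
  intro s hs
  rw [withDensity_apply _ (MeasurableSet.univ_pi hs),
    ← lintegral_indicator (MeasurableSet.univ_pi hs)]
  have hind : (Set.univ.pi s).indicator (fun x : Fin n → X => ∏ i, f (x i))
      = fun x => ∏ i, (s i).indicator f (x i) := by
    funext x
    by_cases hx : x ∈ Set.univ.pi s
    · rw [Set.indicator_of_mem hx]
      exact Finset.prod_congr rfl fun i _ => (Set.indicator_of_mem (hx i (Set.mem_univ i)) f).symm
    · rw [Set.indicator_of_notMem hx]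
      rw [Set.mem_univ_pi] at hx
      push_neg at hx
      obtain ⟨i, hi⟩ := hx
      exact (Finset.prod_eq_zero (Finset.mem_univ i) (Set.indicator_of_notMem hi f)).symm
  rw [hind, aux_lintegral_pi_prod μ n (fun i => (s i).indicator f)
    (fun i => hf.indicator (hs i))]
  refine Finset.prod_congr rfl fun i _ => ?_
  rw [lintegral_indicator (hs i), ← withDensity_apply _ (hs i), hν]

lemma aux_map_eval {X : Type*} [MeasurableSpace X] (ν : Measure X) [IsProbabilityMeasure ν]
    (n : ℕ) (i : Fin n) :
    Measure.map (fun x : Fin n → X => x i) (Measure.pi fun _ : Fin n => ν) = ν := by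
  ext s hs
  rw [Measure.map_apply (measurable_pi_apply i) hs]
  have hpre : (fun x : Fin n → X => x i) ⁻¹' s
      = Set.univ.pi (Function.update (fun _ => Set.univ) i s) := Set.eval_preimage
  rw [hpre, Measure.pi_pi]
  rw [Fintype.prod_eq_single i (fun j hj => by
    rw [Function.update_of_ne hj]; exact measure_univ)]
  rw [Function.update_self]

end DSAux


/-- Deuschel–Stroock lower bound: a change of measure estimate for the probability that the
empirical measure belongs to a set `A` of probability measures. -/
theorem deuschel_stroock_lower_bound
    {X : Type*} [MetricSpace X] [PolishSpace X] [MeasurableSpace X] [BorelSpace X]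
    (μ ν : Measure X) [IsProbabilityMeasure μ] [IsProbabilityMeasure ν]
    (n : ℕ) (hn : 1 ≤ n) (A : Set (Measure X))
    (hAmeas : MeasurableSet {x : Fin n → X | empMeasure x ∈ A})
    (hac : ν ≪ μ) (hH : relEntropy ν μ < ∞)
    (hpos : 0 < (Measure.pi fun _ : Fin n => ν) {x | empMeasure x ∈ A}) :
    (1 / (n : ℝ)) * Real.log
        (((Measure.pi fun _ : Fin n => μ) {x | empMeasure x ∈ A}).toReal *
          Real.exp ((n : ℝ) * (relEntropy ν μ).toReal)) ≥
      -(relEntropy ν μ).toReal *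
          ((Measure.pi fun _ : Fin n => ν) {x | empMeasure x ∉ A}).toReal /
          ((Measure.pi fun _ : Fin n => ν) {x | empMeasure x ∈ A}).toReal +
        (1 / (n : ℝ)) * Real.log
          ((Measure.pi fun _ : Fin n => ν) {x | empMeasure x ∈ A}).toReal -
        1 / ((n : ℝ) * Real.exp 1 *
          ((Measure.pi fun _ : Fin n => ν) {x | empMeasure x ∈ A}).toReal) := by
  classical
  set P : Measure (Fin n → X) := Measure.pi fun _ : Fin n => μ with hP
  set Q : Measure (Fin n → X) := Measure.pi fun _ : Fin n => ν with hQ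
  set B : Set (Fin n → X) := {x | empMeasure x ∈ A} with hB
  have hBc : {x : Fin n → X | empMeasure x ∉ A} = Bᶜ := rfl
  rw [ge_iff_le, hBc]
  by_cases hcond : ν ≪ μ ∧ Integrable (fun x => Real.log ((ν.rnDeriv μ x).toReal)) ν
  swap
  · rw [relEntropy, if_neg hcond] at hH
    simp at hH
  have hint : Integrable (fun x => Real.log ((ν.rnDeriv μ x).toReal)) ν := hcond.2
  set L : X → ℝ := fun a => Real.log ((ν.rnDeriv μ a).toReal) with hLdef
  set I : ℝ := ∫ a, L a ∂ν with hIdef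
  have hfmeas : Measurable fun a : X => ((ν.rnDeriv μ a).toReal) :=
    (Measure.measurable_rnDeriv ν μ).ennreal_toReal
  have hLmeas : Measurable L := Real.measurable_log.comp hfmeas
  have hνpos : ∀ᵐ a ∂ν, 0 < ((ν.rnDeriv μ a).toReal) := by
    filter_upwards [Measure.rnDeriv_pos hac, hac.ae_le (Measure.rnDeriv_lt_top ν μ)] with a h1 h2
    exact ENNReal.toReal_pos h1.ne' h2.ne
  have hinvint : Integrable (fun a => ((ν.rnDeriv μ a).toReal)⁻¹) ν := by
    rw [← integrable_rnDeriv_smul_iff hac]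
    simp only [smul_eq_mul]
    refine Integrable.mono' (integrable_const (1:ℝ)) (hfmeas.mul hfmeas.inv).aestronglyMeasurable
      (ae_of_all _ fun a => ?_)
    rw [Real.norm_eq_abs, abs_of_nonneg (mul_nonneg ENNReal.toReal_nonneg (inv_nonneg.mpr ENNReal.toReal_nonneg))]
    exact aux_mul_inv_le_one ENNReal.toReal_nonneg
  have hI0 : 0 ≤ I := by
    have hlogint' : Integrable (fun a => Real.log (((ν.rnDeriv μ a).toReal)⁻¹)) ν := by
      simp only [Real.log_inv]
      exact hint.neg
    have hjen := aux_integral_log_le ν hinvint hlogint' (hνpos.mono fun a ha => inv_pos.mpr ha)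
    have hlhs : ∫ a, Real.log (((ν.rnDeriv μ a).toReal)⁻¹) ∂ν = -I := by
      simp only [Real.log_inv]
      exact integral_neg _
    have hinv1 : ∫ a, ((ν.rnDeriv μ a).toReal)⁻¹ ∂ν ≤ 1 := by
      rw [← integral_rnDeriv_smul hac]
      calc ∫ a, (ν.rnDeriv μ a).toReal • ((ν.rnDeriv μ a).toReal)⁻¹ ∂μ
          ≤ ∫ _, (1:ℝ) ∂μ := by
            refine integral_mono_ae ((integrable_rnDeriv_smul_iff hac).mpr hinvint)
              (integrable_const _) (ae_of_all _ fun a => ?_)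
            simpa [smul_eq_mul] using
              aux_mul_inv_le_one (t := (ν.rnDeriv μ a).toReal) ENNReal.toReal_nonneg
        _ = 1 := by simp
    have hnn : 0 ≤ ∫ a, ((ν.rnDeriv μ a).toReal)⁻¹ ∂ν :=
      integral_nonneg fun a => inv_nonneg.mpr ENNReal.toReal_nonneg
    have hfin := hjen.trans (Real.log_nonpos hnn hinv1)
    rw [hlhs] at hfin
    linarith
  have hHtoReal : (relEntropy ν μ).toReal = I := by
    rw [relEntropy, if_pos hcond]
    exact ENNReal.toReal_ofReal hI0
  rw [hHtoReal]
  have hrn := Measure.measurable_rnDeriv ν μ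
  have hwd : μ.withDensity (ν.rnDeriv μ) = ν := Measure.withDensity_rnDeriv_eq ν μ hac
  have hpiw := aux_pi_withDensity μ ν hrn hwd n
  have hQP : Q ≪ P := by
    rw [hQ, hP, hpiw]
    exact withDensity_absolutelyContinuous _ _
  have hρmeas : Measurable fun x : Fin n → X => ∏ i, ν.rnDeriv μ (x i) :=
    Finset.measurable_prod _ fun i _ => hrn.comp (measurable_pi_apply i)
  have hGρ : Q.rnDeriv P =ᵐ[P] fun x => ∏ i, ν.rnDeriv μ (x i) := by
    rw [hQ, hP, hpiw]
    exact Measure.rnDeriv_withDensity _ hρmeas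
  set G : (Fin n → X) → ℝ := fun x => (Q.rnDeriv P x).toReal with hGdef
  have hGmeas : Measurable G := (Measure.measurable_rnDeriv Q P).ennreal_toReal
  have hcoord : ∀ᵐ x ∂Q, ∀ i, 0 < ν.rnDeriv μ (x i) ∧ ν.rnDeriv μ (x i) < ∞ := by
    rw [hQ, ae_all_iff]
    intro i
    have hbase : ∀ᵐ a ∂ν, 0 < ν.rnDeriv μ a ∧ ν.rnDeriv μ a < ∞ :=
      (Measure.rnDeriv_pos hac).and (hac.ae_le (Measure.rnDeriv_lt_top ν μ))
    exact (MeasureTheory.Measure.tendsto_eval_ae_ae (μ := fun _ : Fin n => ν) (i := i)).eventually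
      hbase
  have hlogG : (fun x => Real.log (G x)) =ᵐ[Q] fun x => ∑ i, L (x i) := by
    filter_upwards [hQP.ae_le hGρ, hcoord] with x hx hx2
    show Real.log ((Q.rnDeriv P x).toReal) = _
    rw [hx, ENNReal.toReal_prod,
      Real.log_prod (fun i _ => (ENNReal.toReal_pos (hx2 i).1.ne' (hx2 i).2.ne).ne')]
  have hmapQ : ∀ i : Fin n, Measure.map (fun x : Fin n → X => x i) Q = ν := by
    intro i
    rw [hQ]
    exact aux_map_eval ν n i
  have hLint : ∀ i : Fin n, Integrable (fun x : Fin n → X => L (x i)) Q := by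
    intro i
    have hmeasmap : AEStronglyMeasurable L (Measure.map (fun x : Fin n → X => x i) Q) :=
      hLmeas.aestronglyMeasurable
    exact (integrable_map_measure hmeasmap (measurable_pi_apply i).aemeasurable).mp
      (by rw [hmapQ i]; exact hint)
  have hsumint : Integrable (fun x : Fin n → X => ∑ i, L (x i)) Q :=
    integrable_finset_sum _ fun i _ => hLint i
  have hlogGint : Integrable (fun x => Real.log (G x)) Q := hsumint.congr hlogG.symm
  have hintGlog : ∫ x, Real.log (G x) ∂Q = (n : ℝ) * I := by
    rw [integral_congr_ae hlogG, integral_finset_sum _ fun i _ => hLint i]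
    have hone : ∀ i : Fin n, ∫ x, L (x i) ∂Q = I := by
      intro i
      have hmeasmap : AEStronglyMeasurable L (Measure.map (fun x : Fin n → X => x i) Q) :=
        hLmeas.aestronglyMeasurable
      have hIM := integral_map (μ := Q) (measurable_pi_apply i).aemeasurable hmeasmap
      rw [hmapQ i] at hIM
      exact hIM.symm
    simp only [hone]
    rw [Finset.sum_const, Finset.card_univ, Fintype.card_fin, nsmul_eq_mul]
  have hGpos : ∀ᵐ x ∂Q, 0 < G x := by
    filter_upwards [Measure.rnDeriv_pos hQP, hQP.ae_le (Measure.rnDeriv_lt_top Q P)] with x h1 h2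
    exact ENNReal.toReal_pos h1.ne' h2.ne
  have hQBne : Q B ≠ ⊤ := measure_ne_top _ _
  set c : ℝ := (Q B).toReal with hcdef
  have hc0 : 0 < c := ENNReal.toReal_pos hpos.ne' hQBne
  have hcompl : (Q Bᶜ).toReal = 1 - c := by
    rw [prob_compl_eq_one_sub hAmeas, ENNReal.toReal_sub_of_le prob_le_one (by simp), hcdef]
    simp
  set m : Measure (Fin n → X) := (Q B)⁻¹ • Q.restrict B with hmdef
  have hmprob : IsProbabilityMeasure m := by
    constructor
    rw [hmdef, Measure.smul_apply, Measure.restrict_apply_univ, smul_eq_mul,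
      ENNReal.inv_mul_cancel hpos.ne' hQBne]
  have hmint : ∀ φ : (Fin n → X) → ℝ, ∫ x, φ x ∂m = c⁻¹ * ∫ x in B, φ x ∂Q := by
    intro φ
    rw [hmdef, integral_smul_measure, ENNReal.toReal_inv, smul_eq_mul, hcdef]
  have hmae : ∀ {p : (Fin n → X) → Prop}, (∀ᵐ x ∂Q, p x) → ∀ᵐ x ∂m, p x := by
    intro p hp
    rw [hmdef]
    exact Measure.ae_smul_measure (ae_restrict_of_ae hp) _
  have hmIntOf : ∀ {φ : (Fin n → X) → ℝ}, Integrable φ Q → Integrable φ m := by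
    intro φ hφ
    rw [hmdef]
    exact (hφ.restrict).smul_measure (by simp [ENNReal.inv_ne_top, hpos.ne'])
  have hGinvQ : Integrable (fun x => (G x)⁻¹) Q := by
    rw [← integrable_rnDeriv_smul_iff hQP]
    simp only [smul_eq_mul]
    refine Integrable.mono' (integrable_const (1:ℝ))
      (hGmeas.mul hGmeas.inv).aestronglyMeasurable (ae_of_all _ fun x => ?_)
    rw [Real.norm_eq_abs, abs_of_nonneg (mul_nonneg ENNReal.toReal_nonneg (inv_nonneg.mpr ENNReal.toReal_nonneg))]
    exact aux_mul_inv_le_one ENNReal.toReal_nonneg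
  have hGinvm : Integrable (fun x => (G x)⁻¹) m := hmIntOf hGinvQ
  have hloginvm : Integrable (fun x => Real.log ((G x)⁻¹)) m := by
    simp only [Real.log_inv]
    exact (hmIntOf hlogGint).neg
  have hGposm : ∀ᵐ x ∂m, 0 < (G x)⁻¹ := hmae (hGpos.mono fun x hx => inv_pos.mpr hx)
  have hjen := aux_integral_log_le m hGinvm hloginvm hGposm
  have ha_pos : 0 < ∫ x, (G x)⁻¹ ∂m := aux_integral_pos m hGinvm hGposm
  have hBsetle : ∫ x in B, (G x)⁻¹ ∂Q ≤ (P B).toReal := by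
    rw [← integral_indicator hAmeas, ← integral_rnDeriv_smul hQP]
    have h2 : ∫ x, B.indicator (fun _ : Fin n → X => (1:ℝ)) x ∂P = (P B).toReal := by
      rw [integral_indicator hAmeas]
      simp [measureReal_def]
    rw [← h2]
    refine integral_mono_ae
      ((integrable_rnDeriv_smul_iff hQP).mpr (hGinvQ.indicator hAmeas))
      ((integrable_const (1:ℝ)).indicator hAmeas) (ae_of_all _ fun x => ?_)
    by_cases hxB : x ∈ B
    · simp only [Set.indicator_of_mem hxB, smul_eq_mul]
      exact aux_mul_inv_le_one ENNReal.toReal_nonneg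
    · simp [Set.indicator_of_notMem hxB]
  have hintB_pos : 0 < ∫ x in B, (G x)⁻¹ ∂Q := by
    have hm1 := ha_pos
    rw [hmint] at hm1
    nlinarith [inv_pos.mpr hc0, hm1]
  have hPBpos : 0 < (P B).toReal := lt_of_lt_of_le hintB_pos hBsetle
  have hloga : Real.log (∫ x, (G x)⁻¹ ∂m) ≤ Real.log ((P B).toReal) - Real.log c := by
    have hale : ∫ x, (G x)⁻¹ ∂m ≤ (P B).toReal / c := by
      rw [hmint, div_eq_inv_mul]
      exact mul_le_mul_of_nonneg_left hBsetle (inv_nonneg.mpr hc0.le)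
    calc Real.log (∫ x, (G x)⁻¹ ∂m) ≤ Real.log ((P B).toReal / c) := Real.log_le_log ha_pos hale
      _ = Real.log ((P B).toReal) - Real.log c := Real.log_div hPBpos.ne' hc0.ne'
  have hjenlhs : ∫ x, Real.log ((G x)⁻¹) ∂m = -(c⁻¹ * ∫ x in B, Real.log (G x) ∂Q) := by
    simp only [Real.log_inv]
    rw [integral_neg, hmint]
  have hsplit : (∫ x in B, Real.log (G x) ∂Q) + (∫ x in Bᶜ, Real.log (G x) ∂Q) = (n : ℝ) * I := by
    rw [integral_add_compl hAmeas hlogGint, hintGlog]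
  have hSC : -(Real.exp 1)⁻¹ ≤ ∫ x in Bᶜ, Real.log (G x) ∂Q := by
    rw [← integral_indicator hAmeas.compl, ← integral_rnDeriv_smul hQP]
    have hconst : ∫ x, Bᶜ.indicator (fun _ : Fin n → X => -(Real.exp 1)⁻¹) x ∂P
        = -(Real.exp 1)⁻¹ * (P Bᶜ).toReal := by
      rw [integral_indicator hAmeas.compl]
      simp [mul_comm, measureReal_def]
    have hmono2 : ∫ x, Bᶜ.indicator (fun _ : Fin n → X => -(Real.exp 1)⁻¹) x ∂P
        ≤ ∫ x, (Q.rnDeriv P x).toReal • Bᶜ.indicator (fun x => Real.log (G x)) x ∂P := by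
      refine integral_mono_ae ((integrable_const _).indicator hAmeas.compl)
        ((integrable_rnDeriv_smul_iff hQP).mpr (hlogGint.indicator hAmeas.compl))
        (ae_of_all _ fun x => ?_)
      by_cases hxB : x ∈ Bᶜ
      · simp only [Set.indicator_of_mem hxB, smul_eq_mul]
        exact aux_mul_log_ge ENNReal.toReal_nonneg
      · simp [Set.indicator_of_notMem hxB]
    refine le_trans ?_ hmono2
    rw [hconst]
    have hPBc1 : (P Bᶜ).toReal ≤ 1 := by
      have hple := prob_le_one (μ := P) (s := Bᶜ)
      simpa using ENNReal.toReal_mono (by simp) hple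
    nlinarith [inv_pos.mpr (Real.exp_pos 1), hPBc1]
  set SB := ∫ x in B, Real.log (G x) ∂Q with hSBdef
  set SC := ∫ x in Bᶜ, Real.log (G x) ∂Q with hSCdef
  have hk1 : Real.log c - c⁻¹ * SB ≤ Real.log ((P B).toReal) := by
    rw [hjenlhs] at hjen
    linarith [hjen.trans hloga]
  have hk2 : c⁻¹ * SB ≤ c⁻¹ * ((n : ℝ) * I) + c⁻¹ * (Real.exp 1)⁻¹ := by
    have hSBle : SB ≤ (n : ℝ) * I + (Real.exp 1)⁻¹ := by linarith [hsplit, hSC]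
    calc c⁻¹ * SB ≤ c⁻¹ * ((n : ℝ) * I + (Real.exp 1)⁻¹) :=
          mul_le_mul_of_nonneg_left hSBle (inv_nonneg.mpr hc0.le)
      _ = _ := by ring
  have key : Real.log c - ((n : ℝ) * I) / c - (Real.exp 1)⁻¹ / c ≤ Real.log ((P B).toReal) := by
    have e1 : ((n : ℝ) * I) / c = c⁻¹ * ((n : ℝ) * I) := by ring
    have e2 : (Real.exp 1)⁻¹ / c = c⁻¹ * (Real.exp 1)⁻¹ := by ring
    linarith [hk1, hk2, e1, e2]
  rw [Real.log_mul hPBpos.ne' (Real.exp_ne_zero _), Real.log_exp, hcompl]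
  have hn0 : (0:ℝ) < n := by exact_mod_cast hn.trans_lt' zero_lt_one
  have hinner : (n : ℝ) * (-I * (1 - c) / c) + Real.log c - 1 / (Real.exp 1 * c)
      ≤ Real.log ((P B).toReal) + (n : ℝ) * I := by
    have hid : (n : ℝ) * I * (1 - c) / c + (n : ℝ) * I = ((n : ℝ) * I) / c := by
      field_simp
      ring
    have h3 : (n : ℝ) * (-I * (1 - c) / c) = -((n : ℝ) * I * (1 - c) / c) := by ring
    have h4 : 1 / (Real.exp 1 * c) = (Real.exp 1)⁻¹ / c := by
      field_simp
    linarith [key, hid, h3, h4]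
  have hfin : -I * (1 - c) / c + 1 / (n : ℝ) * Real.log c - 1 / ((n : ℝ) * Real.exp 1 * c)
      = (1 / (n : ℝ)) * ((n : ℝ) * (-I * (1 - c) / c) + Real.log c - 1 / (Real.exp 1 * c)) := by
    field_simp
  rw [hfin]
  exact mul_le_mul_of_nonneg_left hinner (by positivity)
end
end
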